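/- arXiv:2111.05697 — 8 statements merged into one kernel-verified Lean document; each statement's English description precedes it below -/
import Mathlib

section
/- Let G be a finite insoluble group. The soluble graph of G is connected if and only if the soluble graph of G/R(G) is connected, and moreover the two graphs have the same diameter. -/
open Subgroup QuotientGroup

section Aux

variable {G : Type*} [Group G] (R : Subgroup G) [R.Normal] (hRsol : IsSolvable R)

/-- a cyclic closure is solvable -/
lemma sol_closure_singleton (a : G) : IsSolvable (closure ({a} : Set G)) := by
  apply isSolvable_of_comm
  rintro ⟨x, hx⟩ ⟨y, hy⟩
  rw [← Subgroup.zpowers_eq_closure] at hx hy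
  obtain ⟨m, rfl⟩ := Subgroup.mem_zpowers_iff.mp hx
  obtain ⟨n, rfl⟩ := Subgroup.mem_zpowers_iff.mp hy
  ext
  push_cast
  rw [← zpow_add, ← zpow_add, add_comm]

include hRsol in
lemma sol_iff (x y : G) :
    IsSolvable (closure ({(x : G ⧸ R), (y : G ⧸ R)} : Set (G ⧸ R))) ↔
      IsSolvable (closure ({x, y} : Set G)) := by
  set H := closure ({x, y} : Set G) with hH
  have hmap : H.map (QuotientGroup.mk' R) = closure ({(x : G ⧸ R), (y : G ⧸ R)} : Set (G ⧸ R)) := by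
    rw [hH, MonoidHom.map_closure, Set.image_pair]
    rfl
  constructor
  · intro hsol
    -- extension: ker of restriction is inside R
    set f : H →* G ⧸ R := (QuotientGroup.mk' R).comp H.subtype with hf
    have hrange : f.range = closure ({(x : G ⧸ R), (y : G ⧸ R)} : Set (G ⧸ R)) := by
      rw [hf, MonoidHom.range_comp, Subgroup.range_subtype, hmap]
    set g : H →* f.range := f.rangeRestrict with hg
    have hsolr : IsSolvable f.range := by rw [hrange]; exact hsol
    have hsolsub : IsSolvable (R.subgroupOf H) := by
      let φ : (R.subgroupOf H) →* R :=
        { toFun := fun a => ⟨a.1.1, a.2⟩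
          map_one' := rfl
          map_mul' := fun _ _ => rfl }
      have hφ : Function.Injective φ := by
        rintro ⟨⟨a, ha⟩, ha'⟩ ⟨⟨b, hb⟩, hb'⟩ h
        simpa [φ, Subtype.ext_iff] using h
      haveI : Group.IsSolvable R := hRsol
      exact solvable_of_solvable_injective hφ
    haveI : Group.IsSolvable (R.subgroupOf H) := hsolsub
    haveI : Group.IsSolvable f.range := hsolr
    refine solvable_of_ker_le_range (R.subgroupOf H).subtype g ?_
    intro a ha
    rw [Subgroup.range_subtype]
    have hfa : f a = 1 := by
      simpa [hg, MonoidHom.mem_ker, Subtype.ext_iff] using ha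
    have h1 : ((a : G) : G ⧸ R) = 1 := hfa
    exact (QuotientGroup.eq_one_iff (a : G)).mp h1
  · intro hsol
    rw [← hmap]
    haveI : Group.IsSolvable H := hsol
    exact solvable_of_surjective (MonoidHom.subgroupMap_surjective (QuotientGroup.mk' R) H)

end Aux

/-- The soluble graph of `G` relative to a subgroup `R` (intended: the soluble radical):
vertices are the elements of `G` outside `R`, adjacent iff they generate a soluble subgroup. -/
def solubleGraph (G : Type*) [Group G] (R : Subgroup G) :
    SimpleGraph {x : G // x ∉ R} :=
  SimpleGraph.fromRel (fun x y => IsSolvable (Subgroup.closure ({x.1, y.1} : Set G)))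

section Graph

open SimpleGraph

variable {G : Type*} [Group G] (R : Subgroup G) [R.Normal]

lemma adj_iff {G : Type*} [Group G] (R : Subgroup G) (u v : {x : G // x ∉ R}) :
    (solubleGraph G R).Adj u v ↔ u ≠ v ∧ IsSolvable (closure ({u.1, v.1} : Set G)) := by
  rw [solubleGraph, SimpleGraph.fromRel_adj]
  refine and_congr_right fun _ => ?_
  constructor
  · rintro (h | h)
    · exact h
    · rwa [Set.pair_comm] at h
  · exact Or.inl

/-- the projection on vertex sets -/
def liftπ (u : {x : G // x ∉ R}) : {x : G ⧸ R // x ∉ (⊥ : Subgroup (G ⧸ R))} :=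
  ⟨(u.1 : G ⧸ R), by simp [Subgroup.mem_bot, QuotientGroup.eq_one_iff, u.2]⟩

lemma liftπ_surj : Function.Surjective (liftπ R) := by
  rintro ⟨q, hq⟩
  obtain ⟨x, rfl⟩ := QuotientGroup.mk'_surjective R q
  refine ⟨⟨x, ?_⟩, rfl⟩
  simpa [Subgroup.mem_bot, QuotientGroup.eq_one_iff] using hq

variable (hRsol : IsSolvable R)
include hRsol

lemma adj_transfer {u v} (hne : liftπ R u ≠ liftπ R v) :
    (solubleGraph G R).Adj u v ↔ (solubleGraph (G ⧸ R) ⊥).Adj (liftπ R u) (liftπ R v) := by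
  rw [adj_iff, adj_iff]
  have hne' : u ≠ v := fun h => hne (by rw [h])
  constructor
  · rintro ⟨_, hsol⟩
    exact ⟨hne, (sol_iff R hRsol _ _).mpr hsol⟩
  · rintro ⟨_, hsol⟩
    exact ⟨hne', (sol_iff R hRsol _ _).mp hsol⟩

lemma adj_fiber {u v} (hne : u ≠ v) (heq : liftπ R u = liftπ R v) :
    (solubleGraph G R).Adj u v := by
  rw [adj_iff]
  refine ⟨hne, (sol_iff R hRsol _ _).mp ?_⟩
  have h1 : (u.1 : G ⧸ R) = (v.1 : G ⧸ R) := congrArg Subtype.val heq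
  rw [h1, Set.pair_eq_singleton]
  exact sol_closure_singleton _

lemma walk_down {u v} (p : (solubleGraph G R).Walk u v) :
    ∃ q : (solubleGraph (G ⧸ R) ⊥).Walk (liftπ R u) (liftπ R v), q.length ≤ p.length := by
  induction p with
  | nil => exact ⟨.nil, le_rfl⟩
  | @cons a b c h p ih =>
    obtain ⟨q, hq⟩ := ih
    by_cases he : liftπ R a = liftπ R b
    · refine ⟨q.copy he.symm rfl, ?_⟩
      rw [Walk.length_copy, Walk.length_cons]
      omega
    · refine ⟨q.cons ((adj_transfer R hRsol he).mp h), ?_⟩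
      rw [Walk.length_cons, Walk.length_cons]
      omega

lemma walk_up {q1 q2} (q : (solubleGraph (G ⧸ R) ⊥).Walk q1 q2) :
    ∀ u v, liftπ R u = q1 → liftπ R v = q2 → liftπ R u ≠ liftπ R v →
    ∃ p : (solubleGraph G R).Walk u v, p.length ≤ q.length := by
  induction q with
  | nil => intro u v hu hv hne; exact absurd (hu.trans hv.symm) hne
  | @cons a b c h q ih =>
    intro u v hu hv hne
    by_cases hb : b = liftπ R v
    · have hadj : (solubleGraph G R).Adj u v := by
        refine (adj_transfer R hRsol hne).mpr ?_
        rw [hu, ← hb]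
        exact h
      exact ⟨.cons hadj .nil, by simp⟩
    · obtain ⟨z, hz⟩ := liftπ_surj R b
      have hadj : (solubleGraph G R).Adj u z := by
        refine (adj_transfer R hRsol ?_).mpr ?_
        · rw [hu, hz]; exact h.ne
        · rw [hu, hz]; exact h
      obtain ⟨p, hp⟩ := ih z v hz hv (by rw [hz]; exact hb)
      refine ⟨p.cons hadj, ?_⟩
      rw [Walk.length_cons, Walk.length_cons]
      omega

lemma edist_down (u v : {x : G // x ∉ R}) :
    (solubleGraph (G ⧸ R) ⊥).edist (liftπ R u) (liftπ R v) ≤ (solubleGraph G R).edist u v := by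
  rcases eq_or_ne ((solubleGraph G R).edist u v) ⊤ with h | h
  · simp [h]
  · obtain ⟨p, hp⟩ := SimpleGraph.exists_walk_of_edist_ne_top h
    obtain ⟨q, hq⟩ := walk_down R hRsol p
    calc (solubleGraph (G ⧸ R) ⊥).edist (liftπ R u) (liftπ R v) ≤ q.length :=
          SimpleGraph.edist_le q
      _ ≤ (p.length : ℕ∞) := by exact_mod_cast hq
      _ = (solubleGraph G R).edist u v := hp

lemma edist_up {u v : {x : G // x ∉ R}} (hne : liftπ R u ≠ liftπ R v) :
    (solubleGraph G R).edist u v ≤ (solubleGraph (G ⧸ R) ⊥).edist (liftπ R u) (liftπ R v) := by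
  rcases eq_or_ne ((solubleGraph (G ⧸ R) ⊥).edist (liftπ R u) (liftπ R v)) ⊤ with h | h
  · simp [h]
  · obtain ⟨q, hq⟩ := SimpleGraph.exists_walk_of_edist_ne_top h
    obtain ⟨p, hp⟩ := walk_up R hRsol q u v rfl rfl hne
    calc (solubleGraph G R).edist u v ≤ p.length := SimpleGraph.edist_le p
      _ ≤ (q.length : ℕ∞) := by exact_mod_cast hp
      _ = _ := hq

lemma reach_down {u v : {x : G // x ∉ R}} (h : (solubleGraph G R).Reachable u v) :
    (solubleGraph (G ⧸ R) ⊥).Reachable (liftπ R u) (liftπ R v) := by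
  obtain ⟨p⟩ := h
  obtain ⟨q, -⟩ := walk_down R hRsol p
  exact ⟨q⟩

lemma reach_up {u v : {x : G // x ∉ R}}
    (h : (solubleGraph (G ⧸ R) ⊥).Reachable (liftπ R u) (liftπ R v)) :
    (solubleGraph G R).Reachable u v := by
  by_cases he : liftπ R u = liftπ R v
  · rcases eq_or_ne u v with rfl | hne
    · exact Reachable.refl u
    · exact (adj_fiber R hRsol hne he).reachable
  · obtain ⟨q⟩ := h
    obtain ⟨p, -⟩ := walk_up R hRsol q u v rfl rfl he
    exact ⟨p⟩

end Graph

theorem stmt1 {G : Type*} [Group G] [Finite G] (hG : ¬ IsSolvable G)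
    (R : Subgroup G) [R.Normal] (hRsol : IsSolvable R)
    (hRmax : ∀ N : Subgroup G, N.Normal → IsSolvable N → N ≤ R) :
    ((solubleGraph G R).Connected ↔ (solubleGraph (G ⧸ R) ⊥).Connected) ∧
      (solubleGraph G R).ediam = (solubleGraph (G ⧸ R) ⊥).ediam := by
  classical
  have hQ : ¬ IsSolvable (G ⧸ R) := by
    intro h
    haveI : Group.IsSolvable R := hRsol
    haveI : Group.IsSolvable (G ⧸ R) := h
    exact hG (solvable_of_ker_le_range R.subtype (QuotientGroup.mk' R)
      (by rw [QuotientGroup.ker_mk', Subgroup.range_subtype]))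
  have htwo : ∃ a b : G ⧸ R, a ≠ 1 ∧ b ≠ 1 ∧ a ≠ b := by
    by_contra hcon
    push_neg at hcon
    apply hQ
    apply isSolvable_of_comm
    intro a b
    rcases eq_or_ne a 1 with rfl | ha
    · simp
    rcases eq_or_ne b 1 with rfl | hb
    · simp
    rcases eq_or_ne a b with rfl | hab
    · rfl
    exact absurd (hcon a b ha hb) hab
  have hVG : Nonempty {x : G // x ∉ R} := by
    by_contra h
    rw [not_nonempty_iff] at h
    apply hG
    have hall : ∀ g : G, g ∈ R := fun g => not_not.mp fun hg => h.false ⟨g, hg⟩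
    haveI : Group.IsSolvable R := hRsol
    exact solvable_of_surjective (f := R.subtype) fun g => ⟨⟨g, hall g⟩, rfl⟩
  have hVQ : Nonempty {x : G ⧸ R // x ∉ (⊥ : Subgroup (G ⧸ R))} := by
    obtain ⟨a, b, ha, hb, hab⟩ := htwo
    exact ⟨⟨a, by simpa [Subgroup.mem_bot] using ha⟩⟩
  have h1le : 1 ≤ (solubleGraph (G ⧸ R) ⊥).ediam := by
    obtain ⟨a, b, ha, hb, hab⟩ := htwo
    have hq : (⟨a, by simpa [Subgroup.mem_bot] using ha⟩ : {x : G ⧸ R // x ∉ (⊥ : Subgroup (G ⧸ R))})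
        ≠ ⟨b, by simpa [Subgroup.mem_bot] using hb⟩ := by
      simp [Subtype.ext_iff, hab]
    calc (1 : ℕ∞) ≤ (solubleGraph (G ⧸ R) ⊥).edist _ _ :=
          ENat.one_le_iff_ne_zero.mpr (SimpleGraph.edist_eq_zero_iff.ne.mpr hq)
      _ ≤ _ := SimpleGraph.edist_le_ediam
  constructor
  · constructor
    · intro h
      haveI := hVQ
      refine SimpleGraph.Connected.mk fun q1 q2 => ?_
      obtain ⟨u, rfl⟩ := liftπ_surj R q1
      obtain ⟨v, rfl⟩ := liftπ_surj R q2
      exact reach_down R hRsol (h.preconnected u v)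
    · intro h
      haveI := hVG
      exact SimpleGraph.Connected.mk fun u v => reach_up R hRsol (h.preconnected _ _)
  · apply le_antisymm
    · refine SimpleGraph.ediam_le_of_edist_le fun u v => ?_
      by_cases he : liftπ R u = liftπ R v
      · rcases eq_or_ne u v with rfl | hne
        · simp [SimpleGraph.edist_self]
        · refine le_trans ?_ h1le
          simpa using
            SimpleGraph.edist_le (SimpleGraph.Walk.cons (adj_fiber R hRsol hne he)
              SimpleGraph.Walk.nil)
      · exact (edist_up R hRsol he).trans SimpleGraph.edist_le_ediam
    · refine SimpleGraph.ediam_le_of_edist_le fun q1 q2 => ?_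
      obtain ⟨u, rfl⟩ := liftπ_surj R q1
      obtain ⟨v, rfl⟩ := liftπ_surj R q2
      exact (edist_down R hRsol u v).trans SimpleGraph.edist_le_ediam
end

section
/- Let H and K be nontrivial finite groups with trivial soluble radical, i.e., R(H) = R(K) = 1. Then the soluble graph of H × K has diameter at most 3. -/
lemma isSolvable_closure_pair_of_commute {G : Type*} [Group G] {a b : G}
    (h : Commute a b) : IsSolvable (Subgroup.closure ({a, b} : Set G)) := by
  have hcomm : ∀ x ∈ ({a, b} : Set G), ∀ y ∈ ({a, b} : Set G), x * y = y * x := by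
    rintro x (rfl | rfl) y (rfl | rfl)
    · rfl
    · exact h
    · exact h.symm
    · rfl
  letI := Subgroup.closureCommGroupOfComm hcomm
  exact (inferInstance : Group.IsSolvable (Subgroup.closure ({a, b} : Set G)))

lemma adj_of_commute {G : Type*} [Group G] {x y : {z : G // z ∉ (⊥ : Subgroup G)}}
    (hne : x ≠ y) (h : Commute x.1 y.1) : (solubleGraph G ⊥).Adj x y := by
  exact ⟨hne, Or.inl (isSolvable_closure_pair_of_commute h)⟩

lemma edist_le_one_of_commute {G : Type*} [Group G] {x y : {z : G // z ∉ (⊥ : Subgroup G)}}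
    (h : Commute x.1 y.1) : (solubleGraph G ⊥).edist x y ≤ 1 := by
  rcases eq_or_ne x y with rfl | hne
  · simp [SimpleGraph.edist_self]
  · have := SimpleGraph.edist_le ((adj_of_commute hne h).toWalk)
    simpa using this

theorem stmt2 {H K : Type*} [Group H] [Group K] [Finite H] [Finite K]
    [Nontrivial H] [Nontrivial K]
    (hH : ∀ N : Subgroup H, N.Normal → IsSolvable N → N = ⊥)
    (hK : ∀ N : Subgroup K, N.Normal → IsSolvable N → N = ⊥) :
    (solubleGraph (H × K) ⊥).ediam ≤ 3 := by
  classical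
  apply SimpleGraph.ediam_le_of_edist_le
  intro x y
  -- find a = (1, k) with k ≠ 1, commuting with x
  obtain ⟨k0, hk0⟩ := exists_ne (1 : K)
  obtain ⟨h0, hh0⟩ := exists_ne (1 : H)
  have hx : x.1 ≠ 1 := by simpa [Subgroup.mem_bot] using x.2
  have hy : y.1 ≠ 1 := by simpa [Subgroup.mem_bot] using y.2
  -- choose second coordinate for a
  set ka : K := if x.1.2 = 1 then k0 else x.1.2 with hka
  have hka1 : ka ≠ 1 := by
    by_cases hc : x.1.2 = 1 <;> simp [hka, hc, hk0]
  have ha : ((1 : H), ka) ∉ (⊥ : Subgroup (H × K)) := by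
    simp [Subgroup.mem_bot, Prod.ext_iff, hka1]
  set a : {z : H × K // z ∉ (⊥ : Subgroup (H × K))} := ⟨((1 : H), ka), ha⟩ with haa
  set hb' : H := if y.1.1 = 1 then h0 else y.1.1 with hhb
  have hhb1 : hb' ≠ 1 := by
    by_cases hc : y.1.1 = 1 <;> simp [hhb, hc, hh0]
  have hb : ((hb' : H), (1 : K)) ∉ (⊥ : Subgroup (H × K)) := by
    simp [Subgroup.mem_bot, Prod.ext_iff, hhb1]
  set b : {z : H × K // z ∉ (⊥ : Subgroup (H × K))} := ⟨(hb', (1 : K)), hb⟩ with hbb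
  have e1 : (solubleGraph (H × K) ⊥).edist x a ≤ 1 := by
    apply edist_le_one_of_commute
    show Commute x.1 ((1 : H), ka)
    by_cases hc : x.1.2 = 1
    · have : ka = k0 := by simp [hka, hc]
      rw [this]
      unfold Commute SemiconjBy
      ext <;> simp [hc]
    · have : ka = x.1.2 := by simp [hka, hc]
      rw [this]
      unfold Commute SemiconjBy
      ext <;> simp
  have e2 : (solubleGraph (H × K) ⊥).edist a b ≤ 1 := by
    apply edist_le_one_of_commute
    show Commute ((1 : H), ka) ((hb' : H), (1 : K))
    unfold Commute SemiconjBy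
    ext <;> simp
  have e3 : (solubleGraph (H × K) ⊥).edist b y ≤ 1 := by
    apply edist_le_one_of_commute
    show Commute ((hb' : H), (1 : K)) y.1
    by_cases hc : y.1.1 = 1
    · have : hb' = h0 := by simp [hhb, hc]
      rw [this]
      unfold Commute SemiconjBy
      ext <;> simp [hc]
    · have : hb' = y.1.1 := by simp [hhb, hc]
      rw [this]
      unfold Commute SemiconjBy
      ext <;> simp
  calc (solubleGraph (H × K) ⊥).edist x y
      ≤ (solubleGraph (H × K) ⊥).edist x a + (solubleGraph (H × K) ⊥).edist a y :=
        SimpleGraph.edist_triangle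
    _ ≤ (solubleGraph (H × K) ⊥).edist x a +
        ((solubleGraph (H × K) ⊥).edist a b + (solubleGraph (H × K) ⊥).edist b y) := by
        gcongr
        exact SimpleGraph.edist_triangle
    _ ≤ 1 + (1 + 1) := by gcongr
    _ = 3 := by norm_num
end

section
/- Let G be a nontrivial finite group with R(G) = 1. If x, y ∈ G are nontrivial elements such that the normalizers N_G(⟨x⟩) and N_G(⟨y⟩) both have even order, then the distance between x and y in the soluble graph of G is at most 3. -/
open Subgroup

/-- A group generated by `d` and `c` with `zpowers d` normal is solvable. -/
lemma solvable_of_closure_pair_top {G : Type*} [Group G] (d c : G)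
    (hd : (zpowers d).Normal) (h : closure ({d, c} : Set G) = ⊤) : IsSolvable G := by
  have hq : IsSolvable (G ⧸ zpowers d) := by
    apply isSolvable_of_comm
    have hsurj : Function.Surjective (QuotientGroup.mk' (zpowers d)) :=
      QuotientGroup.mk'_surjective _
    have htop : closure ((QuotientGroup.mk' (zpowers d)) '' {d, c}) = ⊤ := by
      rw [← MonoidHom.map_closure, h, ← MonoidHom.range_eq_map,
        MonoidHom.range_eq_top.mpr hsurj]
    have himg : (QuotientGroup.mk' (zpowers d)) '' {d, c}
        = {1, (QuotientGroup.mk' (zpowers d)) c} := by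
      rw [Set.image_pair]
      congr 1
      simpa using (QuotientGroup.eq_one_iff d).mpr (mem_zpowers d)
    rw [himg] at htop
    have htop' : closure {(QuotientGroup.mk' (zpowers d)) c} = ⊤ := by
      rw [← htop]
      apply le_antisymm
      · exact closure_mono (by simp)
      · rw [closure_le]
        rintro z (rfl | rfl)
        · exact one_mem _
        · exact subset_closure rfl
    intro a b
    have ha : a ∈ closure {(QuotientGroup.mk' (zpowers d)) c} := htop' ▸ mem_top a
    have hb : b ∈ closure {(QuotientGroup.mk' (zpowers d)) c} := htop' ▸ mem_top b
    rw [← zpowers_eq_closure] at ha hb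
    rw [mem_zpowers_iff] at ha hb
    obtain ⟨m, rfl⟩ := ha
    obtain ⟨n, rfl⟩ := hb
    exact zpow_mul_comm _ m n
  have hker : (QuotientGroup.mk' (zpowers d)).ker ≤ (zpowers d).subtype.range := by
    rw [QuotientGroup.ker_mk', range_subtype]
  haveI : IsSolvable (zpowers d) := isSolvable_of_comm fun a b => by
    obtain ⟨m, hm⟩ := mem_zpowers_iff.mp a.2
    obtain ⟨n, hn⟩ := mem_zpowers_iff.mp b.2
    apply Subtype.ext
    rw [Subgroup.coe_mul, Subgroup.coe_mul, ← hm, ← hn]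
    exact zpow_mul_comm d m n
  exact solvable_of_ker_le_range (zpowers d).subtype (QuotientGroup.mk' (zpowers d)) hker (hG' := this) (hG'' := hq)

/-- If `c` normalizes `⟨d⟩` then `⟨d, c⟩` is solvable. -/
lemma solvable_closure_pair {G : Type*} [Group G] (d c : G)
    (hc : c ∈ normalizer (zpowers d : Set G)) : IsSolvable (closure ({d, c} : Set G)) := by
  set H := closure ({d, c} : Set G) with hH
  have hdH : d ∈ H := subset_closure (by simp)
  have hcH : c ∈ H := subset_closure (by simp)
  have hle : H ≤ normalizer (zpowers d : Set G) := by
    rw [hH, closure_le]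
    rintro z (rfl | rfl)
    · exact le_normalizer (mem_zpowers z)
    · exact hc
  set d' : H := ⟨d, hdH⟩ with hd'
  set c' : H := ⟨c, hcH⟩ with hc'
  have hnorm : (zpowers d').Normal := by
    constructor
    intro n hn g
    obtain ⟨k, hk⟩ := hn
    have hg : (g : G) ∈ normalizer (zpowers d : Set G) := hle g.2
    rw [mem_normalizer_iff] at hg
    have hmem : (g : G) * (n : G) * (g : G)⁻¹ ∈ zpowers d := by
      refine (hg (n : G)).mp ?_
      refine ⟨k, ?_⟩
      rw [← hk]
      rfl
    obtain ⟨m, hm⟩ := hmem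
    refine ⟨m, Subtype.ext ?_⟩
    simp only [SubgroupClass.coe_zpow, Subgroup.coe_mul, InvMemClass.coe_inv]
    exact hm
  have htop : closure ({d', c'} : Set H) = ⊤ := by
    have := closure_closure_coe_preimage (k := ({d, c} : Set G))
    refine le_antisymm le_top ?_
    rw [← this]
    apply Subgroup.closure_mono
    rintro ⟨z, hz⟩ (h1 | h1)
    · left; exact Subtype.ext h1
    · right; exact Subtype.ext h1
  exact solvable_of_closure_pair_top d' c' hnorm htop

lemma soluble_step {G : Type*} [Group G] (u v : {x : G // x ∉ (⊥ : Subgroup G)})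
    (h : IsSolvable (closure ({u.1, v.1} : Set G))) :
    ∃ w : (solubleGraph G ⊥).Walk u v, w.length ≤ 1 := by
  by_cases huv : u = v
  · subst huv; exact ⟨SimpleGraph.Walk.nil, by simp⟩
  · refine ⟨SimpleGraph.Walk.cons (SimpleGraph.fromRel_adj .. |>.mpr ⟨huv, Or.inl h⟩)
      SimpleGraph.Walk.nil, ?_⟩
    exact le_rfl

theorem stmt4 {G : Type*} [Group G] [Finite G] [Nontrivial G]
    (hR : ∀ N : Subgroup G, N.Normal → IsSolvable N → N = ⊥)
    (x y : G) (hx : x ≠ 1) (hy : y ≠ 1)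
    (hnx : Even (Nat.card (Subgroup.normalizer (Subgroup.zpowers x : Set G))))
    (hny : Even (Nat.card (Subgroup.normalizer (Subgroup.zpowers y : Set G)))) :
    ∃ w : (solubleGraph G ⊥).Walk ⟨x, by simpa using hx⟩ ⟨y, by simpa using hy⟩,
      w.length ≤ 3 := by
  have two : Fact (Nat.Prime 2) := ⟨Nat.prime_two⟩
  obtain ⟨a0, ha0⟩ := exists_prime_orderOf_dvd_card' (G := normalizer (zpowers x : Set G)) 2
    hnx.two_dvd
  obtain ⟨b0, hb0⟩ := exists_prime_orderOf_dvd_card' (G := normalizer (zpowers y : Set G)) 2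
    hny.two_dvd
  set a : G := (a0 : G) with haG
  set b : G := (b0 : G) with hbG
  have hao : orderOf a = 2 := by rw [haG, orderOf_coe, ha0]
  have hbo : orderOf b = 2 := by rw [hbG, orderOf_coe, hb0]
  have ha1 : a ≠ 1 := by
    intro h; rw [h, orderOf_one] at hao; omega
  have hb1 : b ≠ 1 := by
    intro h; rw [h, orderOf_one] at hbo; omega
  have ha2 : a * a = 1 := by
    have := pow_orderOf_eq_one a
    rwa [hao, pow_two] at this
  have hb2 : b * b = 1 := by
    have := pow_orderOf_eq_one b
    rwa [hbo, pow_two] at this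
  have hainv : a⁻¹ = a := inv_eq_of_mul_eq_one_right ha2
  have hbinv : b⁻¹ = b := inv_eq_of_mul_eq_one_right hb2
  -- edge x - a
  have s1 : IsSolvable (closure ({x, a} : Set G)) := solvable_closure_pair x a a0.2
  -- edge b - y
  have s3 : IsSolvable (closure ({b, y} : Set G)) := by
    have : IsSolvable (closure ({y, b} : Set G)) := solvable_closure_pair y b b0.2
    rwa [Set.pair_comm y b] at this
  -- edge a - b
  have hconj : a * (a * b) * a⁻¹ = (a * b)⁻¹ := by
    rw [mul_inv_rev, hainv, hbinv, ← mul_assoc a a b, ha2, one_mul]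
  have hanorm : a ∈ normalizer (zpowers (a * b) : Set G) := by
    rw [mem_normalizer_iff]
    intro h
    constructor
    · rintro ⟨k, hk⟩
      have hk' : (a * b) ^ k = h := hk
      refine ⟨-k, ?_⟩
      show (a * b) ^ (-k) = a * h * a⁻¹
      rw [zpow_neg, ← inv_zpow, ← hconj, conj_zpow, hk']
    · rintro ⟨k, hk⟩
      have hk' : (a * b) ^ k = a * h * a⁻¹ := hk
      have hh : h = a * (a * b) ^ k * a := by
        have h2 : a⁻¹ * (a * h * a⁻¹) * a = h := by group
        rw [← hk', hainv] at h2
        rw [← h2]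
      refine ⟨-k, ?_⟩
      show (a * b) ^ (-k) = h
      rw [zpow_neg, ← inv_zpow, ← hconj, conj_zpow, hainv, ← hh]
  have s2' : IsSolvable (closure ({a * b, a} : Set G)) :=
    solvable_closure_pair (a * b) a hanorm
  have hba : b = a * (a * b) := by rw [← mul_assoc, ha2, one_mul]
  have hcleq : closure ({a, b} : Set G) = closure ({a * b, a} : Set G) := by
    apply le_antisymm <;> rw [closure_le] <;> rintro z (rfl | rfl)
    · exact subset_closure (by simp)
    · have h3 : a * (a * b) ∈ closure ({a * b, a} : Set G) :=
        mul_mem (subset_closure (by simp)) (subset_closure (by simp))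
      rwa [← hba] at h3
    · exact mul_mem (subset_closure (by simp)) (subset_closure (by simp))
    · exact subset_closure (by simp)
  have s2 : IsSolvable (closure ({a, b} : Set G)) := hcleq ▸ s2'
  obtain ⟨w1, h1⟩ := soluble_step ⟨x, by simpa using hx⟩ ⟨a, by simpa using ha1⟩ s1
  obtain ⟨w2, h2⟩ := soluble_step ⟨a, by simpa using ha1⟩ ⟨b, by simpa using hb1⟩ s2
  obtain ⟨w3, h3⟩ := soluble_step ⟨b, by simpa using hb1⟩ ⟨y, by simpa using hy⟩ s3
  refine ⟨w1.append (w2.append w3), ?_⟩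
  simp only [SimpleGraph.Walk.length_append]
  omega
end

section
/- Let G be a nontrivial finite group with R(G) = 1 in which every element is real (conjugate to its inverse). Then the soluble graph of G has diameter at most 3. -/
open Subgroup

theorem aux_solvable_of_inverts {G : Type*} [Group G] {x g : G}
    (hg : g * x * g⁻¹ = x⁻¹) : IsSolvable (closure ({x, g} : Set G)) := by
  set H := closure ({x, g} : Set G) with hHdef
  have hxH : x ∈ H := subset_closure (by simp)
  have hgH : g ∈ H := subset_closure (by simp)
  have h2 : g * x⁻¹ * g⁻¹ = x := by
    have := congrArg Inv.inv hg
    simpa [mul_assoc] using this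
  have hg' : g⁻¹ * x * g = x⁻¹ := by
    calc g⁻¹ * x * g = g⁻¹ * (g * x⁻¹ * g⁻¹) * g := by rw [h2]
    _ = x⁻¹ := by group
  have conj_zpow : ∀ (y a : G) (k : ℤ), (y * a * y⁻¹) ^ k = y * a ^ k * y⁻¹ := by
    intro y a k
    simpa using (map_zpow (MulAut.conj y) a k)
  -- zpowers x is normalized by H
  have hnorm : H ≤ normalizer (zpowers x : Set G) := by
    rw [hHdef, closure_le]
    rintro y (rfl | rfl)
    · intro h
      simp only [SetLike.mem_coe, mem_zpowers_iff]
      constructor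
      · rintro ⟨k, rfl⟩
        exact ⟨k, by group⟩
      · rintro ⟨k, hk⟩
        refine ⟨k, ?_⟩
        calc y ^ k = y⁻¹ * (y * h * y⁻¹) * y := by rw [← hk]; group
        _ = h := by group
    · intro h
      simp only [SetLike.mem_coe, mem_zpowers_iff]
      constructor
      · rintro ⟨k, rfl⟩
        refine ⟨-k, ?_⟩
        rw [← conj_zpow, hg, inv_zpow, ← zpow_neg]
      · rintro ⟨k, hk⟩
        refine ⟨-k, ?_⟩
        calc x ^ (-k) = (x⁻¹) ^ k := by rw [zpow_neg, inv_zpow]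
        _ = (y⁻¹ * x * y⁻¹⁻¹) ^ k := by rw [inv_inv, hg']
        _ = y⁻¹ * x ^ k * y⁻¹⁻¹ := conj_zpow y⁻¹ x k
        _ = y⁻¹ * (x ^ k) * y := by rw [inv_inv]
        _ = y⁻¹ * (y * h * y⁻¹) * y := by rw [hk]
        _ = h := by group
  -- N := zpowers x as a subgroup of H, normal
  set N := (zpowers x).subgroupOf H with hNdef
  have hNnormal : N.Normal := by
    constructor
    intro n hn h
    rw [hNdef, mem_subgroupOf] at hn ⊢
    exact (Subgroup.mem_normalizer_iff.mp (hnorm h.2) _).mp hn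
  -- N is solvable (commutative)
  have hNsolv : IsSolvable N := by
    apply isSolvable_of_comm
    rintro ⟨⟨a, haH⟩, ha⟩ ⟨⟨b, hbH⟩, hb⟩
    rw [hNdef, mem_subgroupOf, mem_zpowers_iff] at ha hb
    obtain ⟨k, hk⟩ := ha
    obtain ⟨l, hl⟩ := hb
    ext
    show a * b = b * a
    have hk' : x ^ k = a := hk
    have hl' : x ^ l = b := hl
    rw [← hk', ← hl']
    exact (Commute.zpow_zpow_self x k l).eq
  -- quotient H ⧸ N is commutative
  have hQsolv : IsSolvable (H ⧸ N) := by
    apply isSolvable_of_comm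
    have key : ∀ (h : G) (hh : h ∈ closure ({x, g} : Set G)),
        (QuotientGroup.mk (⟨h, hHdef ▸ hh⟩ : H) : H ⧸ N)
          ∈ zpowers ((QuotientGroup.mk ⟨g, hgH⟩ : H ⧸ N)) := by
      intro h hh
      induction hh using closure_induction with
      | mem y hy =>
        rcases hy with rfl | rfl
        · have : (QuotientGroup.mk (⟨y, hxH⟩ : H) : H ⧸ N) = 1 := by
            rw [QuotientGroup.eq_one_iff, hNdef, mem_subgroupOf]
            exact mem_zpowers y
          exact this ▸ one_mem _
        · exact mem_zpowers _
      | one => exact one_mem _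
      | mul a b ha hb iha ihb => exact mul_mem iha ihb
      | inv a ha iha => exact inv_mem iha
    intro a b
    obtain ⟨⟨a', ha'⟩, rfl⟩ := QuotientGroup.mk_surjective a
    obtain ⟨⟨b', hb'⟩, rfl⟩ := QuotientGroup.mk_surjective b
    obtain ⟨k, hk⟩ := mem_zpowers_iff.mp (key a' (hHdef ▸ ha'))
    obtain ⟨l, hl⟩ := mem_zpowers_iff.mp (key b' (hHdef ▸ hb'))
    rw [← hk, ← hl]
    exact (Commute.zpow_zpow_self _ k l).eq
  exact solvable_of_ker_le_range N.subtype (QuotientGroup.mk' N)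
    (by rw [QuotientGroup.ker_mk', Subgroup.range_subtype]) (hG' := hNsolv) (hG'' := hQsolv)

-- Lemma B: two involutions generate a solvable (dihedral) group
theorem aux_solvable_of_involutions {G : Type*} [Group G] {t s : G}
    (ht : t * t = 1) (hs : s * s = 1) : IsSolvable (closure ({t, s} : Set G)) := by
  have htinv : t⁻¹ = t := inv_eq_of_mul_eq_one_left ht
  have hsinv : s⁻¹ = s := inv_eq_of_mul_eq_one_left hs
  have hinv : t * (t * s) * t⁻¹ = (t * s)⁻¹ := by
    rw [mul_inv_rev, hsinv, htinv]
    calc t * (t * s) * t = (t * t) * (s * t) := by group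
    _ = s * t := by rw [ht, one_mul]
  have heq : closure ({t, s} : Set G) = closure ({t * s, t} : Set G) := by
    apply le_antisymm <;> rw [closure_le] <;> rintro y (rfl | rfl)
    · exact subset_closure (by simp)
    · have h1 : (t * y : G) ∈ closure ({t * y, t} : Set G) := subset_closure (by simp)
      have h2 : (t : G) ∈ closure ({t * y, t} : Set G) := subset_closure (by simp)
      have h3 : t⁻¹ * (t * y) ∈ closure ({t * y, t} : Set G) := mul_mem (inv_mem h2) h1
      simpa using h3
    · exact mul_mem (subset_closure (by simp)) (subset_closure (by simp))
    · exact subset_closure (by simp)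
  rw [heq]
  exact aux_solvable_of_inverts hinv

-- Lemma C: every nontrivial element is joined to an involution
theorem aux_exists_involution {G : Type*} [Group G] [Finite G] {x : G} (hx : x ≠ 1)
    (hreal : IsConj x x⁻¹) :
    ∃ t : G, t ≠ 1 ∧ t * t = 1 ∧ IsSolvable (closure ({x, t} : Set G)) := by
  by_cases hx2 : x * x = 1
  · refine ⟨x, hx, hx2, ?_⟩
    apply isSolvable_of_comm
    rintro ⟨a, ha⟩ ⟨b, hb⟩
    have hsub : closure ({x, x} : Set G) = zpowers x := by
      simp [zpowers_eq_closure]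
    rw [hsub, mem_zpowers_iff] at ha hb
    obtain ⟨k, hk⟩ := ha
    obtain ⟨l, hl⟩ := hb
    ext
    show a * b = b * a
    have hk' : x ^ k = a := hk
    have hl' : x ^ l = b := hl
    rw [← hk', ← hl']
    exact (Commute.zpow_zpow_self x k l).eq
  · rw [isConj_iff] at hreal
    obtain ⟨g, hginv⟩ := hreal
    -- g squared commutes with x
    have hfix : (g * g) * x * (g * g)⁻¹ = x := by
      calc (g * g) * x * (g * g)⁻¹ = g * (g * x * g⁻¹) * g⁻¹ := by group
      _ = g * x⁻¹ * g⁻¹ := by rw [hginv]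
      _ = (g * x * g⁻¹)⁻¹ := by group
      _ = x⁻¹⁻¹ := by rw [hginv]
      _ = x := inv_inv x
    have hcomm : (g * g) * x = x * (g * g) := by
      calc (g * g) * x = ((g * g) * x * (g * g)⁻¹) * (g * g) := by group
      _ = x * (g * g) := by rw [hfix]
    have heven : Even (orderOf g) := by
      by_contra hodd
      rw [Nat.not_even_iff_odd] at hodd
      obtain ⟨m, hm⟩ := hodd
      have hgp : (g * g) ^ (m + 1) = g := by
        rw [← pow_two, ← pow_mul]
        have h21 : 2 * (m + 1) = orderOf g + 1 := by omega
        rw [h21, pow_succ, pow_orderOf_eq_one, one_mul]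
      have hcomm2 : g * x = x * g := by
        rw [← hgp]
        exact ((Commute.pow_left (hcomm : Commute (g*g) x) (m+1)).eq)
      have : x⁻¹ = x := by
        rw [← hginv]
        calc g * x * g⁻¹ = x * g * g⁻¹ := by rw [← hcomm2]
        _ = x := by group
      exact hx2 (by nth_rewrite 1 [← this]; exact inv_mul_cancel x)
    obtain ⟨k, hk⟩ := heven
    have hnpos : 0 < orderOf g := orderOf_pos g
    have hkpos : 0 < k := by omega
    set t := g ^ k with htdef
    have ht2 : t * t = 1 := by
      rw [htdef, ← pow_add]
      have : k + k = orderOf g := by omega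
      rw [this, pow_orderOf_eq_one]
    have htne : t ≠ 1 := by
      intro h
      have hd := orderOf_dvd_of_pow_eq_one (htdef ▸ h : g ^ k = 1)
      exact absurd (Nat.le_of_dvd hkpos hd) (by omega)
    refine ⟨t, htne, ht2, ?_⟩
    haveI := aux_solvable_of_inverts hginv
    have hle : closure ({x, t} : Set G) ≤ closure ({x, g} : Set G) := by
      rw [closure_le]
      rintro y (rfl | rfl)
      · exact subset_closure (by simp)
      · exact pow_mem (subset_closure (by simp)) k
    exact @solvable_of_solvable_injective _ _ _ _ _ (Subgroup.inclusion_injective hle) this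

theorem stmt5 {G : Type*} [Group G] [Finite G] [Nontrivial G]
    (hR : ∀ N : Subgroup G, N.Normal → IsSolvable N → N = ⊥)
    (hreal : ∀ x : G, IsConj x x⁻¹) :
    (solubleGraph G ⊥).ediam ≤ 3 := by
  apply SimpleGraph.ediam_le_of_edist_le
  have step : ∀ (a b : {z : G // z ∉ (⊥ : Subgroup G)}),
      IsSolvable (closure ({a.1, b.1} : Set G)) → (solubleGraph G ⊥).edist a b ≤ 1 := by
    intro a b hsolv
    by_cases hab : a = b
    · subst hab
      simp [SimpleGraph.edist_self]
    · have hadj : (solubleGraph G ⊥).Adj a b := by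
        rw [solubleGraph, SimpleGraph.fromRel_adj]
        exact ⟨hab, Or.inl hsolv⟩
      calc (solubleGraph G ⊥).edist a b ≤ hadj.toWalk.length := SimpleGraph.edist_le _
      _ ≤ 1 := by simp
  rintro ⟨x, hx⟩ ⟨y, hy⟩
  have hx1 : x ≠ 1 := by simpa using hx
  have hy1 : y ≠ 1 := by simpa using hy
  obtain ⟨t, ht1, ht2, htsolv⟩ := aux_exists_involution hx1 (hreal x)
  obtain ⟨s, hs1, hs2, hssolv⟩ := aux_exists_involution hy1 (hreal y)
  have htmem : t ∉ (⊥ : Subgroup G) := by simpa using ht1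
  have hsmem : s ∉ (⊥ : Subgroup G) := by simpa using hs1
  set u : {z : G // z ∉ (⊥ : Subgroup G)} := ⟨x, hx⟩
  set v : {z : G // z ∉ (⊥ : Subgroup G)} := ⟨y, hy⟩
  set tv : {z : G // z ∉ (⊥ : Subgroup G)} := ⟨t, htmem⟩
  set sv : {z : G // z ∉ (⊥ : Subgroup G)} := ⟨s, hsmem⟩
  have h1 : (solubleGraph G ⊥).edist u tv ≤ 1 := step u tv htsolv
  have h2 : (solubleGraph G ⊥).edist tv sv ≤ 1 :=
    step tv sv (aux_solvable_of_involutions ht2 hs2)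
  have hssolv' : IsSolvable (closure ({s, y} : Set G)) := by rwa [Set.pair_comm]
  have h3 : (solubleGraph G ⊥).edist sv v ≤ 1 := step sv v hssolv'
  calc (solubleGraph G ⊥).edist u v
      ≤ (solubleGraph G ⊥).edist u tv + (solubleGraph G ⊥).edist tv v :=
        SimpleGraph.edist_triangle
    _ ≤ (solubleGraph G ⊥).edist u tv
        + ((solubleGraph G ⊥).edist tv sv + (solubleGraph G ⊥).edist sv v) :=
        add_le_add_right SimpleGraph.edist_triangle _
    _ ≤ 1 + (1 + 1) := by
        exact add_le_add h1 (add_le_add h2 h3)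
    _ = 3 := by norm_num
end

section
/- Let G be a nontrivial finite group with R(G) = 1, and suppose a nontrivial element x ∈ G is contained in a unique maximal subgroup H of G. If H is core-free in G and there exists g ∈ G with H ∩ H^g = 1, then the soluble graph of G has diameter at least 3. -/
private lemma mem_of_solvable_closure {G : Type*} [Group G] [Finite G] [Nontrivial G]
    (hR : ∀ N : Subgroup G, N.Normal → IsSolvable N → N = ⊥)
    {x : G} {H : Subgroup G}
    (huniq : ∀ H' : Subgroup G, IsCoatom H' → x ∈ H' → H' = H)
    {z : G} (hz : IsSolvable (Subgroup.closure ({x, z} : Set G))) : z ∈ H := by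
  have hne : Subgroup.closure ({x, z} : Set G) ≠ ⊤ := by
    intro htop
    have hsol : IsSolvable (⊤ : Subgroup G) := htop ▸ hz
    have hb := hR ⊤ inferInstance hsol
    exact absurd hb top_ne_bot
  obtain ⟨M, hM, hle⟩ :=
    (eq_top_or_exists_le_coatom (Subgroup.closure ({x, z} : Set G))).resolve_left hne
  have hxM : x ∈ M := hle (Subgroup.subset_closure (by simp))
  have hMH := huniq M hM hxM
  exact hMH ▸ hle (Subgroup.subset_closure (by simp))

private lemma walk_len_le_two {V : Type*} (Γ : SimpleGraph V) {u v : V} (p : Γ.Walk u v)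
    (h : p.length ≤ 2) : u = v ∨ Γ.Adj u v ∨ ∃ w, Γ.Adj u w ∧ Γ.Adj w v := by
  cases p with
  | nil => exact Or.inl rfl
  | cons h₁ q =>
    cases q with
    | nil => exact Or.inr (Or.inl h₁)
    | cons h₂ r =>
      cases r with
      | nil => exact Or.inr (Or.inr ⟨_, h₁, h₂⟩)
      | cons h₃ s => simp [SimpleGraph.Walk.length_cons] at h

set_option maxHeartbeats 1000000 in
theorem stmt6 {G : Type*} [Group G] [Finite G] [Nontrivial G]
    (hR : ∀ N : Subgroup G, N.Normal → IsSolvable N → N = ⊥)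
    (x : G) (hx : x ≠ 1) (H : Subgroup G) (hmax : IsCoatom H) (hxH : x ∈ H)
    (huniq : ∀ H' : Subgroup G, IsCoatom H' → x ∈ H' → H' = H)
    (hcore : H.normalCore = ⊥)
    (hbase : ∃ g : G, H ⊓ H.map (MulAut.conj g).toMonoidHom = ⊥) :
    3 ≤ (solubleGraph G ⊥).ediam := by
  obtain ⟨g, hg⟩ := hbase
  set Hg := H.map (MulAut.conj g).toMonoidHom with hHgdef
  set y := g * x * g⁻¹ with hydef
  have hyHg : y ∈ Hg := ⟨x, hxH, rfl⟩
  have hyne : y ≠ 1 := by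
    intro h1
    apply hx
    have h2 : g * x * g⁻¹ = 1 := h1
    have := congrArg (fun t => g⁻¹ * t * g) h2
    simpa [mul_assoc] using this
  have huniq' : ∀ H' : Subgroup G, IsCoatom H' → y ∈ H' → H' = Hg := by
    intro H' hH' hyH'
    have hco : IsCoatom (H'.map ((MulAut.conj g).symm : G ≃* G).toMonoidHom) :=
      (((MulAut.conj g).symm : G ≃* G).mapSubgroup.isCoatom_iff H').mpr hH'
    have hxm : x ∈ H'.map ((MulAut.conj g).symm : G ≃* G).toMonoidHom := by
      rw [Subgroup.mem_map_equiv]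
      simpa using hyH'
    have hEq := huniq _ hco hxm
    ext a
    rw [hHgdef, Subgroup.mem_map_equiv, ← hEq, Subgroup.mem_map_equiv]
    have ha : g * (g⁻¹ * a * g) * g⁻¹ = a := by group
    simp [ha]
  have hxy : x ≠ y := by
    intro h
    have hxHg : x ∈ Hg := h ▸ hyHg
    have hmem : x ∈ H ⊓ Hg := ⟨hxH, hxHg⟩
    rw [hg] at hmem
    exact hx (by simpa using hmem)
  have adj_sol : ∀ a b : {w : G // w ∉ (⊥ : Subgroup G)}, (solubleGraph G ⊥).Adj a b →
      IsSolvable (Subgroup.closure ({a.1, b.1} : Set G)) := by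
    intro a b hab
    rw [solubleGraph, SimpleGraph.fromRel_adj] at hab
    rcases hab.2 with h | h
    · exact h
    · rwa [Set.pair_comm] at h
  have hxbot : x ∉ (⊥ : Subgroup G) := by simpa using hx
  have hybot : y ∉ (⊥ : Subgroup G) := by simpa using hyne
  refine le_trans ?_ (SimpleGraph.edist_le_ediam (u := ⟨x, hxbot⟩) (v := ⟨y, hybot⟩))
  by_contra hlt
  push_neg at hlt
  have hne_top : (solubleGraph G ⊥).edist ⟨x, hxbot⟩ ⟨y, hybot⟩ ≠ ⊤ := hlt.ne_top
  obtain ⟨p, hp⟩ := SimpleGraph.exists_walk_of_edist_ne_top hne_top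
  have hlen : p.length ≤ 2 := by
    have h3 : (p.length : ℕ∞) < 3 := hp ▸ hlt
    have h4 : p.length < 3 := by exact_mod_cast h3
    omega
  rcases walk_len_le_two _ p hlen with heq | hadj | ⟨w, h1, h2⟩
  · exact hxy (congrArg Subtype.val heq)
  · have hsol := adj_sol _ _ hadj
    have hxHg : x ∈ Hg := mem_of_solvable_closure hR huniq' (by rwa [Set.pair_comm] at hsol)
    have hmem : x ∈ H ⊓ Hg := ⟨hxH, hxHg⟩
    rw [hg] at hmem
    exact hx (by simpa using hmem)
  · have hs1 := adj_sol _ _ h1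
    have hs2 := adj_sol _ _ h2
    have hwH : w.1 ∈ H := mem_of_solvable_closure hR huniq hs1
    have hwHg : w.1 ∈ Hg := mem_of_solvable_closure hR huniq' (by rwa [Set.pair_comm] at hs2)
    have hmem : w.1 ∈ H ⊓ Hg := ⟨hwH, hwHg⟩
    rw [hg] at hmem
    exact w.2 hmem
end

section
/- Let G = Sₙ be the symmetric group with n ≥ 5. Then for every nontrivial x ∈ G, the normalizer N_G(⟨x⟩) has even order; consequently every vertex of the soluble graph of Sₙ is adjacent to an involution, and the soluble graph of Sₙ has diameter at most 3. -/
section Aux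

variable {G : Type*} [Group G]

lemma conj_mem_normalizer {x g : G}
    (h : g * x * g⁻¹ = x ∨ g * x * g⁻¹ = x⁻¹) :
    g ∈ (Subgroup.normalizer (Subgroup.zpowers x : Set G)) := by
  have hmap : (Subgroup.zpowers x).map (MulAut.conj g).toMonoidHom = Subgroup.zpowers x := by
    rw [MonoidHom.map_zpowers]
    rcases h with h | h
    · simp [MulAut.conj_apply, h]
    · simp [MulAut.conj_apply, h, Subgroup.zpowers_inv]
  rw [Subgroup.mem_normalizer_iff]
  intro y
  constructor
  · intro hy
    have : (MulAut.conj g).toMonoidHom y ∈ (Subgroup.zpowers x).map (MulAut.conj g).toMonoidHom :=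
      Subgroup.mem_map_of_mem _ hy
    rw [hmap] at this
    simpa [MulAut.conj_apply] using this
  · intro hy
    rw [← hmap] at hy
    obtain ⟨z, hz, hze⟩ := hy
    have hzy : z = y := by
      apply (MulAut.conj g).injective
      simpa [MulAut.conj_apply] using hze
    rwa [← hzy]

lemma solvable_closure_of_mem_normalizer (x t : G)
    (ht : t ∈ (Subgroup.normalizer (Subgroup.zpowers x : Set G))) :
    IsSolvable (Subgroup.closure ({x, t} : Set G)) := by
  set H := Subgroup.closure ({x, t} : Set G) with hH
  have hxH : x ∈ H := Subgroup.subset_closure (by simp)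
  have htH : t ∈ H := Subgroup.subset_closure (by simp)
  have hHN : H ≤ (Subgroup.normalizer (Subgroup.zpowers x : Set G)) := by
    rw [hH, Subgroup.closure_le]
    rintro y (rfl | rfl)
    · exact Subgroup.le_normalizer (Subgroup.mem_zpowers y)
    · exact ht
  set K := (Subgroup.zpowers x).subgroupOf H with hK
  haveI hKnormal : K.Normal := by
    constructor
    intro k hk h
    rw [hK, Subgroup.mem_subgroupOf] at hk ⊢
    have hmem := (Subgroup.mem_normalizer_iff.mp (hHN h.2)) (k : G)
    simpa using hmem.mp hk
  have hxle : Subgroup.zpowers x ≤ H := Subgroup.zpowers_le.mpr hxH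
  have hrange : (Subgroup.inclusion hxle).range = K := Subgroup.inclusion_range hxle
  have hker : (QuotientGroup.mk' K).ker = K := QuotientGroup.ker_mk' K
  -- quotient is generated by the image of t
  set tbar := QuotientGroup.mk' K ⟨t, htH⟩ with htbar
  have hgen : ∀ h : H, QuotientGroup.mk' K h ∈ Subgroup.zpowers tbar := by
    intro h
    have key : ∀ (g : G) (hg : g ∈ H),
        QuotientGroup.mk' K ⟨g, hg⟩ ∈ Subgroup.zpowers tbar := by
      intro g hg
      refine Subgroup.closure_induction
        (p := fun g hg => QuotientGroup.mk' K ⟨g, hg⟩ ∈ Subgroup.zpowers tbar)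
        ?_ ?_ ?_ ?_ hg
      · rintro y (rfl | rfl)
        · have h1 : (⟨y, hxH⟩ : H) ∈ K := by
            rw [hK, Subgroup.mem_subgroupOf]
            exact Subgroup.mem_zpowers y
          have : QuotientGroup.mk' K ⟨y, hxH⟩ = 1 := by
            rw [QuotientGroup.mk'_apply, QuotientGroup.eq_one_iff]
            exact h1
          rw [show Subgroup.subset_closure (by simp : y ∈ ({y, t} : Set G)) = hxH from rfl] at *
          · simp only [this]
            exact Subgroup.one_mem _
        · exact Subgroup.mem_zpowers tbar
      · have : QuotientGroup.mk' K (1 : H) = 1 := map_one _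
        rw [show ((1 : H)) = ⟨1, Subgroup.one_mem H⟩ from rfl] at this
        simp only [this]
        exact Subgroup.one_mem _
      · intro a b ha hb hpa hpb
        have : (⟨a * b, Subgroup.mul_mem H ha hb⟩ : H) = ⟨a, ha⟩ * ⟨b, hb⟩ := rfl
        rw [this, map_mul]
        exact Subgroup.mul_mem _ hpa hpb
      · intro a ha hpa
        have : (⟨a⁻¹, Subgroup.inv_mem H ha⟩ : H) = (⟨a, ha⟩ : H)⁻¹ := rfl
        rw [this, map_inv]
        exact Subgroup.inv_mem _ hpa
    have := key h.1 h.2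
    simpa using this
  have hcomm : ∀ a b : H ⧸ K, a * b = b * a := by
    have hz : ∀ a : H ⧸ K, a ∈ Subgroup.zpowers tbar := by
      intro a
      obtain ⟨h, rfl⟩ := QuotientGroup.mk'_surjective K a
      exact hgen h
    intro a b
    obtain ⟨i, hi⟩ := hz a
    obtain ⟨j, hj⟩ := hz b
    rw [← hi, ← hj, ← zpow_add, ← zpow_add, add_comm]
  haveI : IsSolvable (H ⧸ K) := isSolvable_of_comm hcomm
  haveI : IsSolvable (Subgroup.zpowers x) := by
    apply isSolvable_of_comm
    rintro ⟨a, i, rfl⟩ ⟨b, j, rfl⟩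
    apply Subtype.ext
    simp only [Subgroup.coe_mul]
    rw [← zpow_add, ← zpow_add, add_comm]
  exact solvable_of_ker_le_range (Subgroup.inclusion hxle) (QuotientGroup.mk' K)
    (by rw [hker, ← hrange]) (hG' := this)
    (hG'' := ‹IsSolvable (H ⧸ K)›)

lemma solvable_closure_of_involutions {a b : G} (ha : a * a = 1) (hb : b * b = 1) :
    IsSolvable (Subgroup.closure ({a, b} : Set G)) := by
  have ha' : a⁻¹ = a := by rw [inv_eq_iff_mul_eq_one]; exact ha
  have hb' : b⁻¹ = b := by rw [inv_eq_iff_mul_eq_one]; exact hb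
  have key : Subgroup.closure ({a, b} : Set G) = Subgroup.closure ({a * b, b} : Set G) := by
    apply le_antisymm <;> rw [Subgroup.closure_le] <;> rintro y (rfl | rfl)
    · have h1 : y * b ∈ Subgroup.closure ({y * b, b} : Set G) :=
        Subgroup.subset_closure (by simp)
      have h2 : b ∈ Subgroup.closure ({y * b, b} : Set G) :=
        Subgroup.subset_closure (by simp)
      simpa using Subgroup.mul_mem _ h1 (Subgroup.inv_mem _ h2)
    · exact Subgroup.subset_closure (by simp)
    · exact Subgroup.mul_mem _ (Subgroup.subset_closure (by simp))
        (Subgroup.subset_closure (by simp))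
    · exact Subgroup.subset_closure (by simp)
  rw [key]
  apply solvable_closure_of_mem_normalizer
  apply conj_mem_normalizer
  right
  rw [mul_inv_rev, ha', hb']
  calc b * (a * b) * b = b * a * (b * b) := by group
    _ = b * a := by rw [hb, mul_one]

end Aux

theorem stmt11 (n : ℕ) (hn : 5 ≤ n) :
    (∀ x : Equiv.Perm (Fin n), x ≠ 1 →
        Even (Nat.card (Subgroup.normalizer (Subgroup.zpowers x : Set (Equiv.Perm (Fin n)))))) ∧
      (∀ x : {a : Equiv.Perm (Fin n) // a ∉ (⊥ : Subgroup (Equiv.Perm (Fin n)))},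
        ∃ y, orderOf y.1 = 2 ∧ (solubleGraph (Equiv.Perm (Fin n)) ⊥).Adj x y) ∧
      (solubleGraph (Equiv.Perm (Fin n)) ⊥).ediam ≤ 3 := by
  classical
  haveI : Fact (Nat.Prime 2) := ⟨Nat.prime_two⟩
  have part1 : ∀ x : Equiv.Perm (Fin n), x ≠ 1 →
      Even (Nat.card (Subgroup.normalizer (Subgroup.zpowers x : Set (Equiv.Perm (Fin n))))) := by
    intro x hx
    rw [even_iff_two_dvd]
    by_cases h2 : x * x = 1
    · have hord : orderOf x = 2 := orderOf_eq_prime (by rw [pow_two]; exact h2) hx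
      have hxN : x ∈ (Subgroup.normalizer (Subgroup.zpowers x : Set (Equiv.Perm (Fin n)))) :=
        Subgroup.le_normalizer (Subgroup.mem_zpowers x)
      have hmk : orderOf (⟨x, hxN⟩ : (Subgroup.normalizer (Subgroup.zpowers x : Set (Equiv.Perm (Fin n))))) = 2 := by
        rw [Subgroup.orderOf_mk]; exact hord
      exact hmk ▸ orderOf_dvd_natCard (⟨x, hxN⟩ : (Subgroup.normalizer (Subgroup.zpowers x : Set (Equiv.Perm (Fin n)))))
    · obtain ⟨g, hg⟩ := isConj_iff.mp
        (Equiv.Perm.isConj_iff_cycleType_eq.mpr (Equiv.Perm.cycleType_inv x).symm)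
      have hgN : g ∈ (Subgroup.normalizer (Subgroup.zpowers x : Set (Equiv.Perm (Fin n)))) := conj_mem_normalizer (Or.inr hg)
      have hginvx : g * x⁻¹ * g⁻¹ = x := by
        have h' := congrArg Inv.inv hg
        rw [inv_inv] at h'
        calc g * x⁻¹ * g⁻¹ = (g * x * g⁻¹)⁻¹ := by simp [mul_inv_rev, mul_assoc]
          _ = x := h'
      have hsq : ∀ k : ℕ, g ^ (2 * k) * x * (g ^ (2 * k))⁻¹ = x := by
        intro k
        induction k with
        | zero => simp
        | succ k ih =>
          have e : g ^ (2 * (k + 1)) = g * (g * g ^ (2 * k)) := by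
            rw [show 2 * (k + 1) = 1 + (1 + 2 * k) by ring, pow_add, pow_add, pow_one]
          rw [e]
          calc g * (g * g ^ (2 * k)) * x * (g * (g * g ^ (2 * k)))⁻¹
              = g * (g * (g ^ (2 * k) * x * (g ^ (2 * k))⁻¹) * g⁻¹) * g⁻¹ := by group
            _ = x := by rw [ih, hg, hginvx]
      have hgord : Even (orderOf g) := by
        rcases Nat.even_or_odd (orderOf g) with he | ho
        · exact he
        · exfalso
          obtain ⟨k, hk⟩ := ho
          have h1 : g ^ (2 * k + 1) = 1 := by rw [← hk]; exact pow_orderOf_eq_one g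
          have h2' : g ^ (2 * k + 1) * x * (g ^ (2 * k + 1))⁻¹ = x⁻¹ := by
            rw [show 2 * k + 1 = 1 + 2 * k by ring, pow_add, pow_one]
            calc g * g ^ (2 * k) * x * (g * g ^ (2 * k))⁻¹
                = g * (g ^ (2 * k) * x * (g ^ (2 * k))⁻¹) * g⁻¹ := by group
              _ = x⁻¹ := by rw [hsq k, hg]
          rw [h1] at h2'
          simp only [one_mul, inv_one, mul_one] at h2'
          apply h2
          nth_rewrite 2 [h2']
          group
      have hmk : orderOf (⟨g, hgN⟩ : (Subgroup.normalizer (Subgroup.zpowers x : Set (Equiv.Perm (Fin n))))) = orderOf g :=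
        Subgroup.orderOf_mk g hgN
      have hdvd : orderOf g ∣ Nat.card (Subgroup.normalizer (Subgroup.zpowers x : Set (Equiv.Perm (Fin n)))) :=
        hmk ▸ orderOf_dvd_natCard (⟨g, hgN⟩ : (Subgroup.normalizer (Subgroup.zpowers x : Set (Equiv.Perm (Fin n)))))
      exact dvd_trans hgord.two_dvd hdvd
  have helper : ∀ x : Equiv.Perm (Fin n), x ≠ 1 →
      ∃ t : Equiv.Perm (Fin n), orderOf t = 2 ∧ t ≠ x ∧
        t ∈ (Subgroup.normalizer (Subgroup.zpowers x : Set (Equiv.Perm (Fin n)))) := by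
    intro x hx
    by_cases h2 : x * x = 1
    · obtain ⟨a, ha⟩ : ∃ a, x a ≠ a := by
        by_contra hc; push_neg at hc; exact hx (Equiv.ext hc)
      set b := x a with hb
      have hab : a ≠ b := fun h => ha h.symm
      have hxb : x b = a := by rw [hb, ← Equiv.Perm.mul_apply, h2, Equiv.Perm.one_apply]
      by_cases hxs : x = Equiv.swap a b
      · obtain ⟨c, hc⟩ : ∃ c, c ∉ ({a, b} : Finset (Fin n)) := by
          have h1 : ({a, b} : Finset (Fin n)).card ≤ 2 := by
            apply le_trans (Finset.card_insert_le a {b})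
            simp
          by_contra hcon; push_neg at hcon
          have hle : (Finset.univ : Finset (Fin n)).card ≤ ({a, b} : Finset (Fin n)).card :=
            Finset.card_le_card (fun z _ => hcon z)
          rw [Finset.card_univ, Fintype.card_fin] at hle
          omega
        obtain ⟨d, hd⟩ : ∃ d, d ∉ ({a, b, c} : Finset (Fin n)) := by
          have h1 : ({a, b, c} : Finset (Fin n)).card ≤ 3 := by
            apply le_trans (Finset.card_insert_le a {b, c})
            have := Finset.card_insert_le b ({c} : Finset (Fin n))
            simp only [Finset.card_singleton] at this ⊢
            omega
          by_contra hcon; push_neg at hcon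
          have hle : (Finset.univ : Finset (Fin n)).card ≤ ({a, b, c} : Finset (Fin n)).card :=
            Finset.card_le_card (fun z _ => hcon z)
          rw [Finset.card_univ, Fintype.card_fin] at hle
          omega
        simp only [Finset.mem_insert, Finset.mem_singleton, not_or] at hc hd
        obtain ⟨hca, hcb⟩ := hc
        obtain ⟨hda, hdb, hdc⟩ := hd
        have hcd : c ≠ d := fun h => hdc h.symm
        refine ⟨Equiv.swap c d, ?_, ?_, ?_⟩
        · refine orderOf_eq_prime (by rw [pow_two, Equiv.swap_mul_self]) ?_
          intro h
          have : Equiv.swap c d c = c := by rw [h]; rfl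
          rw [Equiv.swap_apply_left] at this
          exact hcd this.symm
        · intro h
          have h' : Equiv.swap c d a = x a := by rw [h]
          rw [Equiv.swap_apply_of_ne_of_ne (Ne.symm hca) (Ne.symm hda), ← hb] at h'
          exact hab h'
        · apply conj_mem_normalizer
          left
          rw [hxs, ← Equiv.swap_apply_apply,
            Equiv.swap_apply_of_ne_of_ne (Ne.symm hca) (Ne.symm hda),
            Equiv.swap_apply_of_ne_of_ne (Ne.symm hcb) (Ne.symm hdb)]
      · have hcomm : x * Equiv.swap a b * x⁻¹ = Equiv.swap a b := by
          rw [← Equiv.swap_apply_apply, ← hb, hxb]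
          exact Equiv.swap_comm b a
        refine ⟨Equiv.swap a b, ?_, fun h => hxs h.symm, ?_⟩
        · refine orderOf_eq_prime (by rw [pow_two, Equiv.swap_mul_self]) ?_
          intro h
          have : Equiv.swap a b a = a := by rw [h]; rfl
          rw [Equiv.swap_apply_left] at this
          exact hab this.symm
        · apply conj_mem_normalizer
          left
          have hts : Equiv.swap a b * x = x * Equiv.swap a b :=
            (mul_inv_eq_iff_eq_mul.mp hcomm).symm
          rw [hts, mul_assoc]
          simp
    · have heven := part1 x hx
      haveI : Fintype ((Subgroup.normalizer (Subgroup.zpowers x : Set (Equiv.Perm (Fin n))))) := Fintype.ofFinite _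
      obtain ⟨t', ht'⟩ := exists_prime_orderOf_dvd_card
        (G := (Subgroup.normalizer (Subgroup.zpowers x : Set (Equiv.Perm (Fin n))))) 2
        (by rw [← Nat.card_eq_fintype_card]; exact heven.two_dvd)
      refine ⟨t'.1, ?_, ?_, t'.2⟩
      · rw [Subgroup.orderOf_coe]; exact ht'
      · intro h
        apply h2
        have h1 : t' * t' = 1 := by
          have := pow_orderOf_eq_one t'
          rwa [ht', pow_two] at this
        have h1' : t'.1 * t'.1 = 1 := by
          simpa using congrArg Subtype.val h1
        rwa [h] at h1'
  have sq2 : ∀ t : Equiv.Perm (Fin n), orderOf t = 2 → t * t = 1 := by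
    intro t h
    have := pow_orderOf_eq_one t
    rwa [h, pow_two] at this
  have part2 : ∀ x : {a : Equiv.Perm (Fin n) // a ∉ (⊥ : Subgroup (Equiv.Perm (Fin n)))},
      ∃ y, orderOf y.1 = 2 ∧ (solubleGraph (Equiv.Perm (Fin n)) ⊥).Adj x y := by
    intro x
    have hx1 : x.1 ≠ 1 := by simpa [Subgroup.mem_bot] using x.2
    obtain ⟨t, ht2, htx, htN⟩ := helper x.1 hx1
    have ht1 : t ≠ 1 := by intro h; rw [h] at ht2; simp at ht2
    refine ⟨⟨t, by simpa [Subgroup.mem_bot] using ht1⟩, ht2, ?_⟩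
    simp only [solubleGraph, SimpleGraph.fromRel_adj]
    refine ⟨fun h => htx (congrArg Subtype.val h).symm, Or.inl ?_⟩
    exact solvable_closure_of_mem_normalizer x.1 t htN
  refine ⟨part1, part2, ?_⟩
  rw [SimpleGraph.ediam_le_iff]
  intro u v
  rcases eq_or_ne u v with rfl | huv
  · rw [SimpleGraph.edist_self]
    exact zero_le
  · obtain ⟨tu, htu, hau⟩ := part2 u
    obtain ⟨tv, htv, hav⟩ := part2 v
    have h1 : (solubleGraph (Equiv.Perm (Fin n)) ⊥).edist u tu ≤ 1 :=
      le_of_eq (SimpleGraph.edist_eq_one_iff_adj.mpr hau)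
    have h3 : (solubleGraph (Equiv.Perm (Fin n)) ⊥).edist tv v ≤ 1 :=
      le_of_eq (SimpleGraph.edist_eq_one_iff_adj.mpr hav.symm)
    have h2 : (solubleGraph (Equiv.Perm (Fin n)) ⊥).edist tu tv ≤ 1 := by
      rcases eq_or_ne tu tv with rfl | hne
      · rw [SimpleGraph.edist_self]; exact zero_le_one
      · refine le_of_eq (SimpleGraph.edist_eq_one_iff_adj.mpr ?_)
        simp only [solubleGraph, SimpleGraph.fromRel_adj]
        exact ⟨hne, Or.inl (solvable_closure_of_involutions (sq2 _ htu) (sq2 _ htv))⟩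
    calc (solubleGraph (Equiv.Perm (Fin n)) ⊥).edist u v
        ≤ (solubleGraph (Equiv.Perm (Fin n)) ⊥).edist u tu
            + (solubleGraph (Equiv.Perm (Fin n)) ⊥).edist tu v :=
          SimpleGraph.edist_triangle
      _ ≤ 1 + ((solubleGraph (Equiv.Perm (Fin n)) ⊥).edist tu tv
            + (solubleGraph (Equiv.Perm (Fin n)) ⊥).edist tv v) :=
          add_le_add h1 SimpleGraph.edist_triangle
      _ ≤ 1 + (1 + 1) := add_le_add le_rfl (add_le_add h2 h3)
      _ = 3 := by norm_num
end

section
/- Let p ≥ 5 be a prime and G = A_p the alternating group. Then the non-generating graph of G has diameter at most 3, where the non-generating graph has as vertices the nontrivial elements of G, with x adjacent to y if and only if ⟨x, y⟩ ≠ G. -/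
open Equiv Equiv.Perm Subgroup

section Helpers

variable {p : ℕ}

private lemma fresh' (s : Finset (Fin p)) (h : s.card < p) : ∃ t, t ∉ s := by
  have : (sᶜ : Finset (Fin p)).Nonempty := by
    rw [← Finset.card_pos, Finset.card_compl, Fintype.card_fin]
    omega
  obtain ⟨t, ht⟩ := this
  exact ⟨t, Finset.mem_compl.mp ht⟩

private lemma fresh4 (hp5 : 5 ≤ p) (a b c d : Fin p) :
    ∃ t : Fin p, t ≠ a ∧ t ≠ b ∧ t ≠ c ∧ t ≠ d := by
  obtain ⟨t, ht⟩ := fresh' ({a, b, c, d} : Finset (Fin p)) (by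
    calc ({a, b, c, d} : Finset (Fin p)).card
        ≤ ({b, c, d} : Finset (Fin p)).card + 1 := Finset.card_insert_le _ _
      _ ≤ (({c, d} : Finset (Fin p)).card + 1) + 1 :=
          Nat.add_le_add_right (Finset.card_insert_le _ _) 1
      _ ≤ ((({d} : Finset (Fin p)).card + 1) + 1) + 1 :=
          Nat.add_le_add_right (Nat.add_le_add_right (Finset.card_insert_le _ _) 1) 1
      _ ≤ 4 := by simp
      _ < p := by omega)
  refine ⟨t, ?_, ?_, ?_, ?_⟩ <;> (intro hh; apply ht; simp [hh])

private lemma double_swap_mem {a b c d : Fin p} (hab : a ≠ b) (hcd : c ≠ d) :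
    swap a b * swap c d ∈ alternatingGroup (Fin p) := by
  rw [Equiv.Perm.mem_alternatingGroup, Equiv.Perm.sign_mul, Equiv.Perm.sign_swap hab,
    Equiv.Perm.sign_swap hcd]
  simp

private lemma coe_ne_one {g : Perm (Fin p)} (hg : g ∈ alternatingGroup (Fin p)) (h1 : g ≠ 1) :
    (⟨g, hg⟩ : alternatingGroup (Fin p)) ≠ 1 := by
  intro h
  exact h1 (congrArg Subtype.val h)

private lemma mem_stab {g : Perm (Fin p)} (hg : g ∈ alternatingGroup (Fin p)) {a : Fin p}
    (ha : g a = a) :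
    (⟨g, hg⟩ : alternatingGroup (Fin p)) ∈ MulAction.stabilizer (alternatingGroup (Fin p)) a := by
  rw [MulAction.mem_stabilizer_iff]
  exact ha

private lemma stab_ne_top (hp5 : 5 ≤ p) (a : Fin p) :
    MulAction.stabilizer (alternatingGroup (Fin p)) a ≠ ⊤ := by
  obtain ⟨b, hb, -, -, -⟩ := fresh4 hp5 a a a a
  obtain ⟨c, hca, hcb, -, -⟩ := fresh4 hp5 a b a b
  intro htop
  have hg : swap a b * swap b c ∈ alternatingGroup (Fin p) :=
    double_swap_mem (Ne.symm hb) (Ne.symm hcb)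
  have hmem : (⟨_, hg⟩ : alternatingGroup (Fin p)) ∈
      MulAction.stabilizer (alternatingGroup (Fin p)) a := htop ▸ Subgroup.mem_top _
  rw [MulAction.mem_stabilizer_iff] at hmem
  have : (swap a b * swap b c) a = a := hmem
  rw [Equiv.Perm.mul_apply, swap_apply_of_ne_of_ne (Ne.symm hb) (Ne.symm hca),
    swap_apply_left] at this
  exact hb this

private lemma closure_pair_ne_top {G : Type*} [Group G] {H : Subgroup G} (hH : H ≠ ⊤)
    {x z : G} (hx : x ∈ H) (hz : z ∈ H) : Subgroup.closure ({x, z} : Set G) ≠ ⊤ := by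
  intro h
  have hle : Subgroup.closure ({x, z} : Set G) ≤ H := by
    rw [Subgroup.closure_le]
    intro w hw
    simp only [Set.mem_insert_iff, Set.mem_singleton_iff] at hw
    rcases hw with rfl | rfl <;> assumption
  exact hH (top_unique (h ▸ hle))

open Pointwise in
private lemma smul_set_eq {g : alternatingGroup (Fin p)} {S : Set (Fin p)}
    (h : ∀ c, (g : Perm (Fin p)) c ∈ S ↔ c ∈ S) : g • S = S := by
  ext d
  rw [Set.mem_smul_set_iff_inv_smul_mem]
  have h2 := h (((g : Perm (Fin p)))⁻¹ d)
  rw [show (g : Perm (Fin p)) ((g : Perm (Fin p))⁻¹ d) = d from Equiv.apply_symm_apply _ _] at h2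
  exact h2.symm

private lemma fact_lt (hp5 : 5 ≤ p) : 2 * (p * p) < p.factorial := by
  induction p, hp5 using Nat.le_induction with
  | base => decide
  | succ n hn ih =>
      calc 2 * ((n + 1) * (n + 1)) ≤ (n + 1) * (2 * (n * n)) := by nlinarith
        _ < (n + 1) * n.factorial := by
            have := Nat.factorial_pos n
            exact Nat.mul_lt_mul_of_le_of_lt (le_refl (n+1)) ih (by omega)
        _ = (n + 1).factorial := (Nat.factorial_succ n).symm

end Helpers


/-- The non-generating graph of a group `G`: vertices are the nontrivial elements of `G`,
with two distinct vertices adjacent iff they do not generate `G`. -/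
def nonGenGraph (G : Type*) [Group G] : SimpleGraph {x : G // x ≠ 1} :=
  SimpleGraph.fromRel (fun x y => Subgroup.closure ({x.1, y.1} : Set G) ≠ ⊤)

section Main
variable {p : ℕ}

private lemma fact_lt' (hp5 : 5 ≤ p) : 2 * (p * p) < p.factorial := by
  induction p, hp5 using Nat.le_induction with
  | base => decide
  | succ n hn ih =>
      calc 2 * ((n + 1) * (n + 1)) ≤ (n + 1) * (2 * (n * n)) := by nlinarith
        _ < (n + 1) * n.factorial := by
            exact Nat.mul_lt_mul_of_le_of_lt (le_refl (n + 1)) ih (by omega)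
        _ = (n + 1).factorial := (Nat.factorial_succ n).symm

private lemma key_pcycle (hp : p.Prime) (hp5 : 5 ≤ p) (x : Perm (Fin p))
    (hx : x ∈ alternatingGroup (Fin p)) (a : Fin p)
    (hfp : ∀ c, x c ≠ c) (hall : ∀ b, x.SameCycle a b) :
    ∃ (z : Perm (Fin p)) (hz : z ∈ alternatingGroup (Fin p)), z ≠ 1 ∧ z a = a ∧
      ∃ H : Subgroup (alternatingGroup (Fin p)), H ≠ ⊤ ∧
        (⟨x, hx⟩ : alternatingGroup (Fin p)) ∈ H ∧ (⟨z, hz⟩ : alternatingGroup (Fin p)) ∈ H := by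
  haveI := Fact.mk hp
  haveI : NeZero p := ⟨hp.pos.ne'⟩
  have hcyc : x.IsCycle := ⟨a, hfp a, fun b _ => hall b⟩
  have hsupp : x.support = Finset.univ :=
    Finset.eq_univ_iff_forall.mpr fun b => Equiv.Perm.mem_support.mpr (hfp b)
  have ho : orderOf x = p := by
    rw [hcyc.orderOf, hsupp, Finset.card_univ, Fintype.card_fin]
  set f : ZMod p → Fin p := fun i => (x ^ i.val) a with hfdef
  have L : ∀ n : ℕ, (x ^ n) a = f ((n : ZMod p)) := by
    intro n
    show (x ^ n) a = (x ^ ((n : ZMod p).val)) a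
    have hmp := pow_mod_orderOf x n
    rw [ho] at hmp
    rw [ZMod.val_natCast, hmp]
  have Lz : ∀ i : ℤ, (x ^ i) a = f ((i : ZMod p)) := by
    intro i
    have hmod : (((i : ZMod p).val : ℤ) : ZMod p) = ((i : ZMod p)) := by
      push_cast [ZMod.natCast_val, ZMod.cast_id]
      try rfl
    have h1 : x ^ i = x ^ (((i : ZMod p).val : ℤ)) := by
      rw [zpow_eq_zpow_iff_modEq, ho]
      exact ((ZMod.intCast_eq_intCast_iff _ _ _).mp hmod).symm
    rw [h1, zpow_natCast]
  have hbij : Function.Bijective f := by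
    rw [Fintype.bijective_iff_surjective_and_card]
    constructor
    · intro c
      obtain ⟨i, hi⟩ := hall c
      exact ⟨(i : ZMod p), by rw [← Lz i]; exact hi⟩
    · rw [ZMod.card, Fintype.card_fin]
  set e : ZMod p ≃ Fin p := Equiv.ofBijective f hbij with hedef
  have hea : ∀ j : ZMod p, e j = f j := fun j => rfl
  obtain ⟨g, hg⟩ := IsCyclic.exists_generator (α := (ZMod p)ˣ)
  have hog : orderOf g = p - 1 := by
    rw [orderOf_eq_card_of_forall_mem_zpowers hg, Nat.card_eq_fintype_card, ZMod.card_units]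
  have hg2 : g ^ 2 ≠ 1 := by
    intro h
    have hdvd := orderOf_dvd_of_pow_eq_one h
    rw [hog] at hdvd
    have := Nat.le_of_dvd (by omega) hdvd
    omega
  set r : (ZMod p)ˣ := g ^ 2 with hrdef
  have hr1 : (r : ZMod p) ≠ 1 := by
    intro h
    exact hg2 (Units.ext h)
  set m : Perm (ZMod p) := Equiv.mulLeft₀ (r : ZMod p) (Units.ne_zero r) with hmdef
  have hmsign : Equiv.Perm.sign m = 1 := by
    set m' : Perm (ZMod p) := Equiv.mulLeft₀ (g : ZMod p) (Units.ne_zero g) with hm'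
    have hmm : m = m' * m' := by
      ext j
      show (r : ZMod p) * j = (g : ZMod p) * ((g : ZMod p) * j)
      rw [hrdef]
      push_cast
      ring
    rw [hmm, map_mul]
    exact Int.units_mul_self _
  set z : Perm (Fin p) := e.permCongr m with hzdef
  have hze : ∀ j : ZMod p, z (e j) = e ((r : ZMod p) * j) := by
    intro j
    rw [hzdef, Equiv.permCongr_apply, Equiv.symm_apply_apply]
    rfl
  have hzA : z ∈ alternatingGroup (Fin p) := by
    rw [Equiv.Perm.mem_alternatingGroup, hzdef, Equiv.Perm.sign_permCongr]
    exact hmsign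
  have he0 : e 0 = a := by
    show f 0 = a
    show (x ^ (0 : ZMod p).val) a = a
    rw [ZMod.val_zero, pow_zero]
    rfl
  have hza : z a = a := by
    conv_lhs => rw [← he0]
    rw [hze 0, mul_zero, he0]
  have hz1 : z ≠ 1 := by
    intro h
    apply hr1
    have h2 := hze 1
    rw [h] at h2
    simp only [Equiv.Perm.coe_one, id_eq, mul_one] at h2
    exact (e.injective h2).symm
  have hpow : ∀ (n : ℕ) (j : ZMod p), (x ^ n) (e j) = e ((n : ZMod p) + j) := by
    intro n j
    have h1 : (x ^ n) (e j) = (x ^ (n + j.val)) a := by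
      rw [hea, pow_add, Equiv.Perm.mul_apply]
    rw [h1, L (n + j.val), hea]
    congr 1
    push_cast [ZMod.natCast_val, ZMod.cast_id]
    ring
  have hxe : ∀ j : ZMod p, x (e j) = e (1 + j) := by
    intro j
    have := hpow 1 j
    rwa [pow_one, Nat.cast_one] at this
  set rv : ℕ := ((r : ZMod p)).val with hrvdef
  have hrvcast : ((rv : ℕ) : ZMod p) = (r : ZMod p) := by
    rw [hrvdef, ZMod.natCast_val, ZMod.cast_id]
  have hcomm : z * x = x ^ rv * z := by
    apply Equiv.ext
    intro c
    obtain ⟨j, rfl⟩ := e.surjective c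
    rw [Equiv.Perm.mul_apply, Equiv.Perm.mul_apply, hxe j, hze, hze, hpow rv, hrvcast]
    congr 1
    ring
  have hconj : z * x * z⁻¹ = x ^ rv := by
    rw [hcomm]
    exact mul_inv_cancel_right _ _
  set x' : alternatingGroup (Fin p) := ⟨x, hx⟩ with hx'def
  set z' : alternatingGroup (Fin p) := ⟨z, hzA⟩ with hz'def
  have hconj' : z' * x' * z'⁻¹ = x' ^ rv := by
    apply Subtype.ext
    show (z' : Perm (Fin p)) * x * (z' : Perm (Fin p))⁻¹ = ((x' ^ rv : alternatingGroup (Fin p)) : Perm (Fin p))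
    rw [SubmonoidClass.coe_pow]
    exact hconj
  refine ⟨z, hzA, hz1, hza, Subgroup.normalizer (Subgroup.zpowers x' : Set (alternatingGroup (Fin p))), ?_,
    Subgroup.le_normalizer (Subgroup.mem_zpowers x'), ?_⟩
  · intro htop
    have hCperm : ∀ h : Perm (Fin p), h * x = x * h → h a = a → h = 1 := by
      intro h hc hha
      apply Equiv.ext
      intro c
      rw [Equiv.Perm.one_apply]
      obtain ⟨i, hi⟩ := hall c
      have hcom : h * x ^ i = x ^ i * h := (Commute.zpow_right hc i)
      show h c = c
      calc h c = h ((x ^ i) a) := by rw [hi]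
        _ = (x ^ i) (h a) := by rw [← Equiv.Perm.mul_apply, hcom, Equiv.Perm.mul_apply]
        _ = c := by rw [hha, hi]
    have hnorm : ∀ w : alternatingGroup (Fin p), w * x' * w⁻¹ ∈ Subgroup.zpowers x' := by
      intro w
      have hw : w ∈ Subgroup.normalizer (Subgroup.zpowers x' : Set (alternatingGroup (Fin p))) := htop ▸ Subgroup.mem_top w
      exact (Subgroup.mem_normalizer_iff.mp hw x').mp (Subgroup.mem_zpowers x')
    set F : alternatingGroup (Fin p) → (Subgroup.zpowers x') × Fin p :=
      fun w => (⟨w * x' * w⁻¹, hnorm w⟩, (w : Perm (Fin p)) a) with hFdef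
    have hFinj : Function.Injective F := by
      intro w1 w2 hw
      have hw1 : w1 * x' * w1⁻¹ = w2 * x' * w2⁻¹ := Subtype.ext_iff.mp (congrArg Prod.fst hw)
      have hw2 : (w1 : Perm (Fin p)) a = (w2 : Perm (Fin p)) a := congrArg Prod.snd hw
      set h : alternatingGroup (Fin p) := w2⁻¹ * w1 with hhdef
      have hcomm2 : h * x' = x' * h := by
        have e1 : h * x' * h⁻¹ = w2⁻¹ * (w1 * x' * w1⁻¹) * w2 := by rw [hhdef]; group
        rw [hw1] at e1
        have e2 : w2⁻¹ * (w2 * x' * w2⁻¹) * w2 = x' := by group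
        rw [e2] at e1
        calc h * x' = (h * x' * h⁻¹) * h := by group
          _ = x' * h := by rw [e1]
      have hcoe : (h : Perm (Fin p)) * x = x * (h : Perm (Fin p)) := by
        have := congrArg Subtype.val hcomm2
        simpa using this
      have hha : (h : Perm (Fin p)) a = a := by
        show ((w2⁻¹ * w1 : alternatingGroup (Fin p)) : Perm (Fin p)) a = a
        rw [Subgroup.coe_mul, Equiv.Perm.mul_apply, hw2]
        show ((w2⁻¹ : alternatingGroup (Fin p)) : Perm (Fin p)) ((w2 : Perm (Fin p)) a) = a
        rw [Subgroup.coe_inv]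
        exact Equiv.symm_apply_apply _ _
      have h1 : h = 1 := Subtype.ext (hCperm _ hcoe hha)
      have h2 : w2⁻¹ * w1 = 1 := hhdef ▸ h1
      calc w1 = w2 * (w2⁻¹ * w1) := by group
        _ = w2 := by rw [h2, mul_one]
    have hle := Nat.card_le_card_of_injective F hFinj
    rw [Nat.card_prod, Nat.card_zpowers] at hle
    have hox' : orderOf x' = p :=
      ((orderOf_injective (alternatingGroup (Fin p)).subtype Subtype.coe_injective x').symm).trans ho
    haveI : Nontrivial (Fin p) := Fin.nontrivial_iff_two_le.mpr (by omega)
    have hcardA : 2 * Nat.card (alternatingGroup (Fin p)) = p.factorial := by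
      rw [Nat.card_eq_fintype_card, two_mul_card_alternatingGroup, Fintype.card_perm,
        Fintype.card_fin]
    have hnc : Nat.card (Fin p) = p := by simp
    rw [hox', hnc] at hle
    have hlt := fact_lt' hp5
    have hub : p.factorial ≤ 2 * (p * p) := by
      calc p.factorial = 2 * Nat.card (alternatingGroup (Fin p)) := hcardA.symm
        _ ≤ 2 * (p * p) := Nat.mul_le_mul_left 2 hle
    exact absurd hlt (not_lt.mpr hub)
  · have hstep : ∀ n, n ∈ (Subgroup.zpowers x' : Set (alternatingGroup (Fin p))) →
        z' * n * z'⁻¹ ∈ (Subgroup.zpowers x' : Set (alternatingGroup (Fin p))) := by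
      intro n hn
      obtain ⟨k, rfl⟩ := Subgroup.mem_zpowers_iff.mp hn
      have : z' * x' ^ k * z'⁻¹ = (x' ^ rv) ^ k := by rw [← conj_zpow, hconj']
      rw [this]
      exact Subgroup.zpow_mem _ (Subgroup.pow_mem _ (Subgroup.mem_zpowers x') rv) k
    have := Subgroup.mem_normalizer_fintype hstep
    rw [Subgroup.mem_normalizer_iff]
    intro w
    exact this w

open Pointwise in
private lemma key_noncycle (hp5 : 5 ≤ p) (x : Perm (Fin p)) (hx : x ∈ alternatingGroup (Fin p))
    (a : Fin p) (hfp : ∀ c, x c ≠ c) {b : Fin p} (hb : ¬ x.SameCycle a b) :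
    ∃ (z : Perm (Fin p)) (hz : z ∈ alternatingGroup (Fin p)), z ≠ 1 ∧ z a = a ∧
      ∃ H : Subgroup (alternatingGroup (Fin p)), H ≠ ⊤ ∧
        (⟨x, hx⟩ : alternatingGroup (Fin p)) ∈ H ∧ (⟨z, hz⟩ : alternatingGroup (Fin p)) ∈ H := by
  classical
  set S : Set (Fin p) := {c | x.SameCycle b c} with hSdef
  have hbS : b ∈ S := Equiv.Perm.SameCycle.refl x b
  have haS : a ∉ S := fun h => hb h.symm
  have hxS : ∀ c, x c ∈ S ↔ c ∈ S := fun c => Equiv.Perm.sameCycle_apply_right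
  have hxbS : x b ∈ S := (hxS b).mpr hbS
  have hxaS : x a ∉ S := fun h => haS ((hxS a).mp h)
  have hba : b ≠ a := fun h => haS (h ▸ hbS)
  have hxba : x b ≠ a := fun h => haS (h ▸ hxbS)
  have hbxb : b ≠ x b := fun h => hfp b h.symm
  have haxa : a ≠ x a := fun h => hfp a h.symm
  set H : Subgroup (alternatingGroup (Fin p)) :=
    MulAction.stabilizer (alternatingGroup (Fin p)) S with hHdef
  have hHne : H ≠ ⊤ := by
    intro htop
    have hgmem : swap b a * swap a (x a) ∈ alternatingGroup (Fin p) :=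
      double_swap_mem hba haxa
    have hmem : (⟨_, hgmem⟩ : alternatingGroup (Fin p)) ∈ H := htop ▸ Subgroup.mem_top _
    rw [hHdef, MulAction.mem_stabilizer_iff] at hmem
    have hgb : (swap b a * swap a (x a)) b = a := by
      rw [Equiv.Perm.mul_apply, swap_apply_of_ne_of_ne hba (fun h => hxaS (by rw [← h]; exact hbS)), swap_apply_left]
    have hmem2 : ((swap b a * swap a (x a)) b : Fin p) ∈ S := by
      have h3 : (⟨_, hgmem⟩ : alternatingGroup (Fin p)) • b ∈
          (⟨_, hgmem⟩ : alternatingGroup (Fin p)) • S := Set.smul_mem_smul_set hbS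
      rw [hmem] at h3
      exact h3
    rw [hgb] at hmem2
    exact haS hmem2
  have hxH : (⟨x, hx⟩ : alternatingGroup (Fin p)) ∈ H := by
    rw [hHdef, MulAction.mem_stabilizer_iff]
    exact smul_set_eq hxS
  by_cases htu : ∃ t u : Fin p, t ∉ S ∧ u ∉ S ∧ t ≠ u ∧ t ≠ a ∧ u ≠ a
  · obtain ⟨t, u, htS, huS, htune, hta, hua⟩ := htu
    have htb : t ≠ b := fun h => htS (h ▸ hbS)
    have htxb : t ≠ x b := fun h => htS (h ▸ hxbS)
    have hub : u ≠ b := fun h => huS (h ▸ hbS)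
    have huxb : u ≠ x b := fun h => huS (h ▸ hxbS)
    set z : Perm (Fin p) := swap b (x b) * swap t u with hzdef
    have hzA : z ∈ alternatingGroup (Fin p) := double_swap_mem hbxb htune
    have hzb : z b = x b := by
      rw [hzdef, Equiv.Perm.mul_apply, swap_apply_of_ne_of_ne (Ne.symm htb) (Ne.symm hub),
        swap_apply_left]
    have hzxb : z (x b) = b := by
      rw [hzdef, Equiv.Perm.mul_apply, swap_apply_of_ne_of_ne (Ne.symm htxb) (Ne.symm huxb),
        swap_apply_right]
    have hzt : z t = u := by
      rw [hzdef, Equiv.Perm.mul_apply, swap_apply_left, swap_apply_of_ne_of_ne hub huxb]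
    have hzu : z u = t := by
      rw [hzdef, Equiv.Perm.mul_apply, swap_apply_right, swap_apply_of_ne_of_ne htb htxb]
    have hz1 : z ≠ 1 := fun h => hbxb (by rw [← hzb, h, Equiv.Perm.one_apply])
    have hza : z a = a := by
      rw [hzdef, Equiv.Perm.mul_apply, swap_apply_of_ne_of_ne (Ne.symm hta) (Ne.symm hua),
        swap_apply_of_ne_of_ne (Ne.symm hba) (Ne.symm hxba)]
    have hzS : ∀ c, z c ∈ S ↔ c ∈ S := by
      intro c
      rcases eq_or_ne c b with rfl | h1
      · rw [hzb]; exact iff_of_true hxbS hbS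
      rcases eq_or_ne c (x b) with rfl | h2
      · rw [hzxb]; exact iff_of_true hbS hxbS
      rcases eq_or_ne c t with rfl | h3
      · rw [hzt]; exact iff_of_false huS htS
      rcases eq_or_ne c u with rfl | h4
      · rw [hzu]; exact iff_of_false htS huS
      · have : z c = c := by
          rw [hzdef, Equiv.Perm.mul_apply, swap_apply_of_ne_of_ne h3 h4,
            swap_apply_of_ne_of_ne h1 h2]
        rw [this]
    refine ⟨z, hzA, hz1, hza, H, hHne, hxH, ?_⟩
    rw [hHdef, MulAction.mem_stabilizer_iff]
    exact smul_set_eq hzS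
  · push_neg at htu
    have hcompl : ∀ v, v ∉ S → v = a ∨ v = x a := by
      intro v hvS
      by_contra hcon
      push_neg at hcon
      exact haxa (htu v (x a) hvS hxaS hcon.2 hcon.1).symm
    obtain ⟨s3, hs3a, hs3xa, hs3b, hs3xb⟩ := fresh4 hp5 a (x a) b (x b)
    have hs3S : s3 ∈ S := by
      by_contra h
      rcases hcompl s3 h with h1 | h1
      exacts [hs3a h1, hs3xa h1]
    set z : Perm (Fin p) := swap b (x b) * swap (x b) s3 with hzdef
    have hzA : z ∈ alternatingGroup (Fin p) := double_swap_mem hbxb (Ne.symm hs3xb)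
    have hzb : z b = x b := by
      rw [hzdef, Equiv.Perm.mul_apply, swap_apply_of_ne_of_ne hbxb (Ne.symm hs3b),
        swap_apply_left]
    have hzxb : z (x b) = s3 := by
      rw [hzdef, Equiv.Perm.mul_apply, swap_apply_left,
        swap_apply_of_ne_of_ne hs3b hs3xb]
    have hzs3 : z s3 = b := by
      rw [hzdef, Equiv.Perm.mul_apply, swap_apply_right, swap_apply_right]
    have hz1 : z ≠ 1 := fun h => hbxb (by rw [← hzb, h, Equiv.Perm.one_apply])
    have hza : z a = a := by
      rw [hzdef, Equiv.Perm.mul_apply,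
        swap_apply_of_ne_of_ne (Ne.symm hxba) (Ne.symm hs3a),
        swap_apply_of_ne_of_ne (Ne.symm hba) (Ne.symm hxba)]
    have hzS : ∀ c, z c ∈ S ↔ c ∈ S := by
      intro c
      rcases eq_or_ne c b with rfl | h1
      · rw [hzb]; exact iff_of_true hxbS hbS
      rcases eq_or_ne c (x b) with rfl | h2
      · rw [hzxb]; exact iff_of_true hs3S hxbS
      rcases eq_or_ne c s3 with rfl | h3
      · rw [hzs3]; exact iff_of_true hbS hs3S
      · have : z c = c := by
          rw [hzdef, Equiv.Perm.mul_apply, swap_apply_of_ne_of_ne h2 h3,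
            swap_apply_of_ne_of_ne h1 h2]
        rw [this]
    refine ⟨z, hzA, hz1, hza, H, hHne, hxH, ?_⟩
    rw [hHdef, MulAction.mem_stabilizer_iff]
    exact smul_set_eq hzS

private lemma key (hp : p.Prime) (hp5 : 5 ≤ p) (x : Perm (Fin p))
    (hx : x ∈ alternatingGroup (Fin p)) (hx1 : x ≠ 1) (a : Fin p) :
    ∃ (z : Perm (Fin p)) (hz : z ∈ alternatingGroup (Fin p)), z ≠ 1 ∧ z a = a ∧
      ∃ H : Subgroup (alternatingGroup (Fin p)), H ≠ ⊤ ∧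
        (⟨x, hx⟩ : alternatingGroup (Fin p)) ∈ H ∧ (⟨z, hz⟩ : alternatingGroup (Fin p)) ∈ H := by
  by_cases hxa : x a = a
  · exact ⟨x, hx, hx1, hxa, MulAction.stabilizer _ a, stab_ne_top hp5 a,
      mem_stab hx hxa, mem_stab hx hxa⟩
  by_cases hfix : ∃ c, x c = c
  · obtain ⟨c, hc⟩ := hfix
    obtain ⟨d, hda, hdc, -, -⟩ := fresh4 hp5 a c a c
    obtain ⟨e, hea, hec, hed, -⟩ := fresh4 hp5 a c d d
    obtain ⟨f, hfa, hfc, hfd, hfe⟩ := fresh4 hp5 a c d e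
    set z : Perm (Fin p) := swap d e * swap e f with hzdef
    have hzA : z ∈ alternatingGroup (Fin p) := double_swap_mem (Ne.symm hed) (Ne.symm hfe)
    have hzd : z d = e := by
      rw [hzdef, Equiv.Perm.mul_apply, swap_apply_of_ne_of_ne (Ne.symm hed) (Ne.symm hfd),
        swap_apply_left]
    have hz1 : z ≠ 1 := fun h => (Ne.symm hed) (by rw [← hzd, h, Equiv.Perm.one_apply])
    have hza : z a = a := by
      rw [hzdef, Equiv.Perm.mul_apply, swap_apply_of_ne_of_ne (Ne.symm hea) (Ne.symm hfa),
        swap_apply_of_ne_of_ne (Ne.symm hda) (Ne.symm hea)]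
    have hzc : z c = c := by
      rw [hzdef, Equiv.Perm.mul_apply, swap_apply_of_ne_of_ne (Ne.symm hec) (Ne.symm hfc),
        swap_apply_of_ne_of_ne (Ne.symm hdc) (Ne.symm hec)]
    exact ⟨z, hzA, hz1, hza, MulAction.stabilizer _ c, stab_ne_top hp5 c,
      mem_stab hx hc, mem_stab hzA hzc⟩
  · push_neg at hfix
    by_cases hall : ∀ b, x.SameCycle a b
    · exact key_pcycle hp hp5 x hx a hfix hall
    · obtain ⟨b, hb⟩ := not_forall.mp hall
      exact key_noncycle hp5 x hx a hfix hb


theorem stmt12 (p : ℕ) (hp : p.Prime) (hp5 : 5 ≤ p) :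
    (nonGenGraph (alternatingGroup (Fin p))).ediam ≤ 3 := by
  rw [SimpleGraph.ediam_le_iff]
  intro u v
  have hp0 : 0 < p := by omega
  set a : Fin p := ⟨0, hp0⟩ with ha
  have hu1 : u.1.1 ≠ 1 := fun h => u.2 (Subtype.ext h)
  have hv1 : v.1.1 ≠ 1 := fun h => v.2 (Subtype.ext h)
  obtain ⟨zu, hzuA, hzu1, hzua, Hu, hHu, hxu, hzuH⟩ := key hp hp5 u.1.1 u.1.2 hu1 a
  obtain ⟨zv, hzvA, hzv1, hzva, Hv, hHv, hxv, hzvH⟩ := key hp hp5 v.1.1 v.1.2 hv1 a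
  set U : {w : alternatingGroup (Fin p) // w ≠ 1} := ⟨⟨zu, hzuA⟩, coe_ne_one hzuA hzu1⟩ with hU
  set V : {w : alternatingGroup (Fin p) // w ≠ 1} := ⟨⟨zv, hzvA⟩, coe_ne_one hzvA hzv1⟩ with hV
  have step : ∀ (w1 w2 : {w : alternatingGroup (Fin p) // w ≠ 1}),
      Subgroup.closure ({w1.1, w2.1} : Set (alternatingGroup (Fin p))) ≠ ⊤ →
      (nonGenGraph (alternatingGroup (Fin p))).edist w1 w2 ≤ 1 := by
    intro w1 w2 hcl
    rcases eq_or_ne w1 w2 with rfl | hne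
    · rw [SimpleGraph.edist_self]
      exact zero_le
    · have hadj : (nonGenGraph (alternatingGroup (Fin p))).Adj w1 w2 := by
        rw [nonGenGraph, SimpleGraph.fromRel_adj]
        exact ⟨hne, Or.inl hcl⟩
      exact le_of_eq (SimpleGraph.edist_eq_one_iff_adj.mpr hadj)
  have e1 : (nonGenGraph (alternatingGroup (Fin p))).edist u U ≤ 1 :=
    step u U (closure_pair_ne_top hHu hxu hzuH)
  have e2 : (nonGenGraph (alternatingGroup (Fin p))).edist U V ≤ 1 :=
    step U V (closure_pair_ne_top (stab_ne_top hp5 a) (mem_stab hzuA hzua) (mem_stab hzvA hzva))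
  have e3 : (nonGenGraph (alternatingGroup (Fin p))).edist V v ≤ 1 :=
    step V v (closure_pair_ne_top hHv hzvH hxv)
  calc (nonGenGraph (alternatingGroup (Fin p))).edist u v
      ≤ (nonGenGraph (alternatingGroup (Fin p))).edist u U
        + (nonGenGraph (alternatingGroup (Fin p))).edist U v := SimpleGraph.edist_triangle
    _ ≤ (nonGenGraph (alternatingGroup (Fin p))).edist u U
        + ((nonGenGraph (alternatingGroup (Fin p))).edist U V
          + (nonGenGraph (alternatingGroup (Fin p))).edist V v) := by
        exact add_le_add (le_refl _) SimpleGraph.edist_triangle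
    _ ≤ 1 + (1 + 1) := add_le_add e1 (add_le_add e2 e3)
    _ = 3 := by norm_num

end Main
end

section
/- Let G be a finite group with R(G) = 1 and let x, y be adjacent vertices in the soluble graph of G. Then x and y have distance at most 2 in the metabelian graph of G, i.e., there exists a nontrivial z ∈ G such that ⟨x, z⟩ and ⟨y, z⟩ are both metabelian. -/
/-- A group is metabelian if its derived subgroup is abelian, i.e. the second term of the
derived series is trivial. -/
def IsMetabelian (K : Type*) [Group K] : Prop :=
  derivedSeries K 2 = ⊥

private lemma aux_last {α : Type*} (f : ℕ → α) (b : α) (h0 : f 0 ≠ b) :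
    ∀ m, f m = b → ∃ k, f k ≠ b ∧ f (k + 1) = b := by
  intro m
  induction m with
  | zero => intro h; exact absurd h h0
  | succ n ih =>
    intro h
    by_cases hn : f n = b
    · exact ih hn
    · exact ⟨n, hn, h⟩

private lemma aux_metabelian {G : Type*} [Group G] (K N : Subgroup G)
    (h1 : ⁅K, K⁆ ≤ N) (h2 : ⁅N, N⁆ = ⊥) : IsMetabelian K := by
  have hinj : Function.Injective K.subtype := K.subtype_injective
  have h0 : (derivedSeries K 1).map K.subtype = ⁅K, K⁆ := by
    rw [derivedSeries_succ, Subgroup.map_commutator, derivedSeries_zero,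
      ← MonoidHom.range_eq_map, Subgroup.range_subtype]
  have h3 : (derivedSeries K 2).map K.subtype = ⊥ := by
    rw [show (2 : ℕ) = 1 + 1 from rfl, derivedSeries_succ, Subgroup.map_commutator, h0]
    rw [← le_bot_iff, ← h2]
    exact Subgroup.commutator_mono h1 h1
  exact (Subgroup.map_eq_bot_iff_of_injective _ hinj).mp h3

private lemma aux_comm_le {G : Type*} [Group G] (N : Subgroup G) {x n : G}
    (hx : x ∈ Subgroup.normalizer (N : Set G)) (hn : n ∈ N) :
    ⁅Subgroup.closure ({x, n} : Set G), Subgroup.closure ({x, n} : Set G)⁆ ≤ N := by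
  set M := Subgroup.normalizer (N : Set G) with hM
  have hnM : n ∈ M := N.le_normalizer hn
  haveI : (N.subgroupOf M).Normal := Subgroup.normal_in_normalizer
  set q := QuotientGroup.mk' (N.subgroupOf M) with hq
  set C : Subgroup M := (Subgroup.zpowers (q ⟨x, hx⟩)).comap q with hC
  have hKC : Subgroup.closure ({x, n} : Set G) ≤ C.map M.subtype := by
    apply (Subgroup.closure_le _).mpr
    rintro g hg
    rcases hg with rfl | rfl
    · exact ⟨⟨g, hx⟩, Subgroup.mem_zpowers _, rfl⟩
    · refine ⟨⟨g, hnM⟩, ?_, rfl⟩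
      have : q ⟨g, hnM⟩ = 1 := (QuotientGroup.eq_one_iff _).mpr (by
        simpa [Subgroup.mem_subgroupOf] using hn)
      show q ⟨g, hnM⟩ ∈ Subgroup.zpowers (q ⟨x, hx⟩)
      rw [this]
      exact one_mem _
  rw [Subgroup.commutator_le]
  intro a ha b hb
  obtain ⟨a', ha', rfl⟩ := hKC ha
  obtain ⟨b', hb', rfl⟩ := hKC hb
  have ha2 : q a' ∈ Subgroup.zpowers (q ⟨x, hx⟩) := ha'
  have hb2 : q b' ∈ Subgroup.zpowers (q ⟨x, hx⟩) := hb'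
  obtain ⟨i, hi⟩ := Subgroup.mem_zpowers_iff.mp ha2
  obtain ⟨j, hj⟩ := Subgroup.mem_zpowers_iff.mp hb2
  have hcomm : q (@Bracket.bracket M M commutatorElement a' b') = 1 := by
    rw [map_commutatorElement, ← hi, ← hj, commutatorElement_eq_one_iff_commute]
    exact (Commute.refl _).zpow_zpow i j
  have hmem : (@Bracket.bracket M M commutatorElement a' b') ∈ N.subgroupOf M := (QuotientGroup.eq_one_iff _).mp hcomm
  rw [Subgroup.mem_subgroupOf] at hmem
  exact hmem

private lemma aux_norm {G : Type*} [Group G] (H : Subgroup G) (P : Subgroup H) [hP : P.Normal]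
    {h : G} (hh : h ∈ H) : h ∈ Subgroup.normalizer ((P.map H.subtype : Subgroup G) : Set G) := by
  rw [Subgroup.mem_normalizer_iff]
  intro g
  constructor
  · rintro ⟨p, hp, rfl⟩
    exact ⟨⟨h, hh⟩ * p * ⟨h, hh⟩⁻¹, hP.conj_mem p hp ⟨h, hh⟩, rfl⟩
  · rintro ⟨p, hp, hpe⟩
    refine ⟨⟨h, hh⟩⁻¹ * p * (⟨h, hh⟩⁻¹)⁻¹, hP.conj_mem p hp ⟨h, hh⟩⁻¹, ?_⟩
    have hpv : (p : G) = h * g * h⁻¹ := hpe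
    simp [hpv]
    group

theorem stmt13 {G : Type*} [Group G] [Finite G]
    (hR : ∀ N : Subgroup G, N.Normal → IsSolvable N → N = ⊥)
    (x y : {a : G // a ∉ (⊥ : Subgroup G)}) (hadj : (solubleGraph G ⊥).Adj x y) :
    ∃ z : G, z ≠ 1 ∧ IsMetabelian (Subgroup.closure ({x.1, z} : Set G)) ∧
      IsMetabelian (Subgroup.closure ({y.1, z} : Set G)) := by
  obtain ⟨hne, hsol⟩ := hadj
  set H := Subgroup.closure ({x.1, y.1} : Set G) with hHdef
  have hH : IsSolvable H := by
    rcases hsol with h | h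
    · exact h
    · rwa [Set.pair_comm] at h
  have hx1 : x.1 ≠ 1 := by
    intro h; exact x.2 (by simp [h])
  have hxH : x.1 ∈ H := Subgroup.subset_closure (Set.mem_insert _ _)
  have hyH : y.1 ∈ H := Subgroup.subset_closure (Set.mem_insert_of_mem _ rfl)
  have h0 : derivedSeries H 0 ≠ ⊥ := by
    rw [derivedSeries_zero]
    intro htop
    have : (⟨x.1, hxH⟩ : H) ∈ (⊥ : Subgroup H) := htop ▸ Subgroup.mem_top _
    rw [Subgroup.mem_bot] at this
    exact hx1 (congrArg Subtype.val this)
  obtain ⟨m, hm⟩ := hH.solvable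
  obtain ⟨k, hk, hk1⟩ := aux_last (derivedSeries H) ⊥ h0 m hm
  set N : Subgroup G := (derivedSeries H k).map H.subtype with hN
  have hNbot : N ≠ ⊥ := by
    intro h
    exact hk ((Subgroup.map_eq_bot_iff_of_injective _ H.subtype_injective).mp h)
  have hNN : ⁅N, N⁆ = ⊥ := by
    rw [hN, ← Subgroup.map_commutator, ← derivedSeries_succ, hk1]
    exact Subgroup.map_bot _
  obtain ⟨⟨n, hnN⟩, hn1⟩ := Subgroup.ne_bot_iff_exists_ne_one.mp hNbot
  have hn1' : n ≠ 1 := fun h => hn1 (Subtype.ext h)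
  haveI : (derivedSeries H k).Normal := derivedSeries_normal _ _
  refine ⟨n, hn1', ?_, ?_⟩
  · exact aux_metabelian _ N (aux_comm_le N (aux_norm H _ hxH) hnN) hNN
  · exact aux_metabelian _ N (aux_comm_le N (aux_norm H _ hyH) hnN) hNN
end
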